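/- arXiv:0905.4048 — 7 statements merged into one kernel-verified Lean document; each statement's English description precedes it below -/
import Mathlib

section
/- Let q ∈ R be nonzero and let I = qR. The colouring induced by I is perfect — i.e., every isometry g of the complex plane with g(R) = R satisfies, for all x, y ∈ R, x − y ∈ I ⟺ g(x) − g(y) ∈ I — if and only if conj(q) ∈ I. -/
open Complex

/-- The primitive `n`-th root of unity `ζ = exp(2πi/n)`. -/
noncomputable def zeta (n : ℕ) : ℂ := Complex.exp (2 * Real.pi * Complex.I / n)

/-- The ring of cyclotomic integers `M_n = ℤ[ζ_n]`, as a subring of `ℂ`. -/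
noncomputable def Rn (n : ℕ) : Subring ℂ := Subring.closure {zeta n}

/-- `ζ_n` as an element of `M_n`. -/
noncomputable def zetaR (n : ℕ) : ↥(Rn n) := ⟨zeta n, Subring.subset_closure rfl⟩

/-- `z ∈ ℂ` lies in the ideal `I` of `Rn n` (viewed inside `ℂ`). -/
def InIdeal (n : ℕ) (I : Ideal ↥(Rn n)) (z : ℂ) : Prop :=
  ∃ w : ↥(Rn n), w ∈ I ∧ (w : ℂ) = z

/-- An isometry of the complex plane: `z ↦ a z + b` or `z ↦ a conj z + b` with `|a| = 1`. -/
def IsIsometry (g : ℂ → ℂ) : Prop :=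
  ∃ a b : ℂ, ‖a‖ = 1 ∧
    ((∀ z, g z = a * z + b) ∨ (∀ z, g z = a * (starRingEnd ℂ) z + b))

/-- An orientation-preserving isometry of the complex plane: `z ↦ a z + b` with `|a| = 1`. -/
def IsOPIsometry (g : ℂ → ℂ) : Prop :=
  ∃ a b : ℂ, ‖a‖ = 1 ∧ ∀ z, g z = a * z + b

/-- `g` is a colour symmetry of the colouring of `Rn n` induced by the ideal `I`. -/
def IsColourSym (n : ℕ) (I : Ideal ↥(Rn n)) (g : ℂ → ℂ) : Prop :=
  ∀ x y : ℂ, x ∈ Rn n → y ∈ Rn n → (InIdeal n I (x - y) ↔ InIdeal n I (g x - g y))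

/-- The colouring induced by `I` is perfect. -/
def IsPerfectColouring (n : ℕ) (I : Ideal ↥(Rn n)) : Prop :=
  ∀ g : ℂ → ℂ, IsIsometry g → g '' (Rn n : Set ℂ) = (Rn n : Set ℂ) → IsColourSym n I g

/-- The colouring induced by `I` is chirally perfect. -/
def IsChirallyPerfectColouring (n : ℕ) (I : Ideal ↥(Rn n)) : Prop :=
  ∀ g : ℂ → ℂ, IsOPIsometry g → g '' (Rn n : Set ℂ) = (Rn n : Set ℂ) → IsColourSym n I g

lemma zeta_pow_n {n : ℕ} (hn : n ≠ 0) : zeta n ^ n = 1 := by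
  rw [zeta, ← Complex.exp_nat_mul]
  rw [mul_div_cancel₀]
  · exact Complex.exp_two_pi_mul_I
  · exact_mod_cast hn

lemma conj_zeta {n : ℕ} (hn : n ≠ 0) :
    (starRingEnd ℂ) (zeta n) = zeta n ^ (n - 1) := by
  have hz : zeta n ≠ 0 := Complex.exp_ne_zero _
  have h1 : (starRingEnd ℂ) (zeta n) * zeta n = 1 := by
    rw [zeta, ← Complex.exp_conj, ← Complex.exp_add]
    have : (starRingEnd ℂ) (2 * Real.pi * Complex.I / n) = -(2 * Real.pi * Complex.I / n) := by
      simp only [map_div₀, map_mul, Complex.conj_I, Complex.conj_ofReal, map_ofNat,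
        map_natCast]
      ring
    rw [this, neg_add_cancel, Complex.exp_zero]
  have h2 : zeta n ^ (n - 1) * zeta n = 1 := by
    rw [← pow_succ, Nat.sub_add_cancel (Nat.one_le_iff_ne_zero.2 hn)]
    exact zeta_pow_n hn
  exact mul_right_cancel₀ hz (h1.trans h2.symm)

lemma conj_mem {n : ℕ} (hn : n ≠ 0) {x : ℂ} (hx : x ∈ Rn n) :
    (starRingEnd ℂ) x ∈ Rn n := by
  have hmap : (Rn n).map (starRingEnd ℂ) ≤ Rn n := by
    rw [Rn, RingHom.map_closure]
    apply Subring.closure_le.2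
    rintro y ⟨z, hz, rfl⟩
    rcases hz with rfl
    rw [SetLike.mem_coe, conj_zeta hn]
    have hmem : zeta n ∈ Subring.closure {zeta n} := Subring.subset_closure rfl
    exact pow_mem hmem _
  exact hmap ⟨x, hx, rfl⟩

lemma inIdeal_iff {n : ℕ} (q : ↥(Rn n)) (z : ℂ) :
    InIdeal n (Ideal.span {q}) z ↔ ∃ s : ℂ, s ∈ Rn n ∧ z = (q : ℂ) * s := by
  constructor
  · rintro ⟨w, hw, rfl⟩
    rw [Ideal.mem_span_singleton] at hw
    obtain ⟨s, rfl⟩ := hw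
    exact ⟨s, s.2, by push_cast; ring⟩
  · rintro ⟨s, hs, rfl⟩
    exact ⟨q * ⟨s, hs⟩, Ideal.mem_span_singleton.2 ⟨⟨s, hs⟩, rfl⟩, by push_cast; ring⟩

/-- the colouring induced by `(q)` is perfect iff `conj q ∈ (q)`. -/
theorem stmt1 (n : ℕ) (hn : 3 ≤ n) (hn2 : n % 4 ≠ 2) (q : ↥(Rn n)) (hq : q ≠ 0) :
    IsPerfectColouring n (Ideal.span {q}) ↔
      InIdeal n (Ideal.span {q}) ((starRingEnd ℂ) (q : ℂ)) := by
  have hn0 : n ≠ 0 := by omega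
  constructor
  · intro hperf
    have hconj_im : (fun z => (starRingEnd ℂ) z) '' (Rn n : Set ℂ) = (Rn n : Set ℂ) := by
      ext z
      constructor
      · rintro ⟨w, hw, rfl⟩
        exact conj_mem hn0 hw
      · intro hz
        exact ⟨(starRingEnd ℂ) z, conj_mem hn0 hz, Complex.conj_conj z⟩
    have hiso : IsIsometry (fun z => (starRingEnd ℂ) z) :=
      ⟨1, 0, by simp, Or.inr (fun z => by simp)⟩
    have hsym := hperf _ hiso hconj_im (q : ℂ) 0 q.2 (Rn n).zero_mem
    simp only [map_zero, sub_zero] at hsym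
    exact hsym.1 ⟨q, Ideal.mem_span_singleton_self q, rfl⟩
  · intro hconjq
    obtain ⟨r, hr, hrq⟩ := (inIdeal_iff q _).1 hconjq
    intro g hg hgR x y hx hy
    obtain ⟨a, b, ha, hcase⟩ := hg
    have hg0 : g 0 = b := by rcases hcase with h | h <;> simp [h]
    have hg1 : g 1 = a + b := by rcases hcase with h | h <;> simp [h]
    have h0R : g 0 ∈ Rn n := by
      have := Set.mem_image_of_mem g (show (0:ℂ) ∈ (Rn n : Set ℂ) from (Rn n).zero_mem)
      rwa [hgR] at this
    have h1R : g 1 ∈ Rn n := by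
      have := Set.mem_image_of_mem g (show (1:ℂ) ∈ (Rn n : Set ℂ) from (Rn n).one_mem)
      rwa [hgR] at this
    have hb : b ∈ Rn n := hg0 ▸ h0R
    have hab : a + b ∈ Rn n := hg1 ▸ h1R
    have haR : a ∈ Rn n := by
      have := (Rn n).sub_mem hab hb
      simpa using this
    have haC : (starRingEnd ℂ) a ∈ Rn n := conj_mem hn0 haR
    have haa : a * (starRingEnd ℂ) a = 1 := by
      rw [Complex.mul_conj, Complex.normSq_eq_norm_sq, ha]
      norm_num
    rw [inIdeal_iff, inIdeal_iff]
    rcases hcase with h | h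
    · have hd : g x - g y = a * (x - y) := by rw [h, h]; ring
      rw [hd]
      constructor
      · rintro ⟨s, hs, hzs⟩
        exact ⟨a * s, mul_mem haR hs, by rw [hzs]; ring⟩
      · rintro ⟨s, hs, hzs⟩
        refine ⟨(starRingEnd ℂ) a * s, mul_mem haC hs, ?_⟩
        calc x - y = (starRingEnd ℂ) a * (a * (x - y)) := by
              rw [← mul_assoc, mul_comm ((starRingEnd ℂ) a) a, haa, one_mul]
        _ = (q : ℂ) * ((starRingEnd ℂ) a * s) := by rw [hzs]; ring
    · have hd : g x - g y = a * (starRingEnd ℂ) (x - y) := by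
        rw [h, h, map_sub]; ring
      rw [hd]
      constructor
      · rintro ⟨s, hs, hzs⟩
        refine ⟨a * r * (starRingEnd ℂ) s, mul_mem (mul_mem haR hr) (conj_mem hn0 hs), ?_⟩
        rw [hzs, map_mul, hrq]
        ring
      · rintro ⟨s, hs, hzs⟩
        refine ⟨a * r * (starRingEnd ℂ) s, mul_mem (mul_mem haR hr) (conj_mem hn0 hs), ?_⟩
        have h1 : (starRingEnd ℂ) (x - y) = (starRingEnd ℂ) a * ((q : ℂ) * s) := by
          rw [← hzs, ← mul_assoc, mul_comm ((starRingEnd ℂ) a) a, haa, one_mul]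
        have h2 : x - y = (starRingEnd ℂ) ((starRingEnd ℂ) a * ((q : ℂ) * s)) := by
          rw [← h1, Complex.conj_conj]
        rw [h2, map_mul, map_mul, Complex.conj_conj, hrq]
        ring
end

section
/- Let c : R → S be a surjective map onto a set S of colours such that for every orientation-preserving isometry g of the complex plane with g(R) = R there exists a permutation π of S with c(g(x)) = π(c(x)) for all x ∈ R (i.e., c is a chirally perfect colouring of R). Then J = {x ∈ R : c(x) = c(0)} is an ideal of R, and for every s ∈ S the colour class c⁻¹(s) is a coset of J in R. -/
open Complex

lemma zeta_abs (n : ℕ) (hn : 3 ≤ n) : ‖zeta n‖ = 1 := by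
  have hre : (2 * (Real.pi : ℂ) * Complex.I / n).re = 0 := by
    have : (2 * (Real.pi : ℂ) * Complex.I / n) = ((2 * Real.pi / n : ℝ) : ℂ) * Complex.I := by
      push_cast; ring
    rw [this]
    simp
  rw [zeta, Complex.norm_exp, hre, Real.exp_zero]

lemma zeta_pow (n : ℕ) (hn : 3 ≤ n) : zeta n ^ n = 1 := by
  have hne : (n : ℂ) ≠ 0 := by
    exact_mod_cast (Nat.pos_of_ne_zero (by omega)).ne'
  rw [zeta, ← Complex.exp_nat_mul]
  have : (n : ℂ) * (2 * Real.pi * Complex.I / n) = 2 * Real.pi * Complex.I := by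
    field_simp
  rw [this, Complex.exp_two_pi_mul_I]

/-- the colour class of `0` in a chirally perfect colouring is an ideal `J`
of `R`, and every colour class is a coset of `J`. -/
theorem stmt3 (n : ℕ) (hn : 3 ≤ n) (hn2 : n % 4 ≠ 2) {S : Type*}
    (c : ℂ → S)
    (hsurj : ∀ s : S, ∃ x ∈ (Rn n : Set ℂ), c x = s)
    (hcps : ∀ g : ℂ → ℂ, IsOPIsometry g → g '' (Rn n : Set ℂ) = (Rn n : Set ℂ) →
      ∃ π : Equiv.Perm S, ∀ x ∈ (Rn n : Set ℂ), c (g x) = π (c x)) :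
    ∃ J : Ideal ↥(Rn n),
      (∀ x : ↥(Rn n), x ∈ J ↔ c (x : ℂ) = c 0) ∧
      ∀ s : S, ∃ t : ↥(Rn n), ∀ x : ↥(Rn n),
        (c (x : ℂ) = s ↔ ∃ w ∈ J, x = w + t) := by
  have hζmem : zeta n ∈ Rn n := Subring.subset_closure rfl
  -- translations
  have himgT : ∀ v ∈ (Rn n : Set ℂ), (fun z => z + v) '' (Rn n : Set ℂ) = (Rn n : Set ℂ) := by
    intro v hv
    ext z
    simp only [Set.mem_image]
    constructor
    · rintro ⟨w, hw, rfl⟩; exact add_mem hw hv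
    · intro hz; exact ⟨z - v, sub_mem hz hv, by ring⟩
  have htrans : ∀ v ∈ (Rn n : Set ℂ), ∀ x ∈ (Rn n : Set ℂ), ∀ y ∈ (Rn n : Set ℂ),
      c x = c y → c (x + v) = c (y + v) := by
    intro v hv x hx y hy hxy
    obtain ⟨π, hπ⟩ := hcps (fun z => z + v) ⟨1, v, by simp, fun z => by ring⟩ (himgT v hv)
    have h1 := hπ x hx
    have h2 := hπ y hy
    rw [h1, h2, hxy]
  -- rotation by ζ
  have hrot : ∀ x ∈ (Rn n : Set ℂ), ∀ y ∈ (Rn n : Set ℂ),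
      c x = c y → c (zeta n * x) = c (zeta n * y) := by
    intro x hx y hy hxy
    have himg : (fun z => zeta n * z) '' (Rn n : Set ℂ) = (Rn n : Set ℂ) := by
      ext z
      simp only [Set.mem_image]
      constructor
      · rintro ⟨w, hw, rfl⟩; exact mul_mem hζmem hw
      · intro hz
        refine ⟨zeta n ^ (n - 1) * z, mul_mem (pow_mem hζmem _) hz, ?_⟩
        rw [← mul_assoc, ← pow_succ']
        have : n - 1 + 1 = n := by omega
        rw [this, zeta_pow n hn, one_mul]
    obtain ⟨π, hπ⟩ := hcps (fun z => zeta n * z)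
      ⟨zeta n, 0, zeta_abs n hn, fun z => by ring⟩ himg
    have h1 := hπ x hx
    have h2 := hπ y hy
    rw [h1, h2, hxy]
  -- negation
  have hneg : ∀ x ∈ (Rn n : Set ℂ), ∀ y ∈ (Rn n : Set ℂ),
      c x = c y → c (-x) = c (-y) := by
    intro x hx y hy hxy
    have himg : (fun z => -z) '' (Rn n : Set ℂ) = (Rn n : Set ℂ) := by
      ext z
      simp only [Set.mem_image]
      constructor
      · rintro ⟨w, hw, rfl⟩; exact neg_mem hw
      · intro hz; exact ⟨-z, neg_mem hz, by ring⟩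
    obtain ⟨π, hπ⟩ := hcps (fun z => -z) ⟨-1, 0, by simp, fun z => by ring⟩ himg
    have h1 := hπ x hx
    have h2 := hπ y hy
    rw [h1, h2, hxy]
  -- multiplicative absorption
  have hmul : ∀ y ∈ Rn n, ∀ x ∈ (Rn n : Set ℂ), c x = c 0 → c (y * x) = c 0 := by
    intro y hy
    induction hy using Subring.closure_induction with
    | mem z hz =>
      intro x hx hcx
      rcases hz with rfl
      have := hrot x hx 0 (zero_mem _) hcx
      simpa using this
    | zero => intro x hx hcx; simp
    | one => intro x hx hcx; simpa using hcx
    | add y₁ y₂ hy₁ hy₂ ih₁ ih₂ =>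
      intro x hx hcx
      have h1 := ih₁ x hx hcx
      have h2 := ih₂ x hx hcx
      have := htrans (y₂ * x) (mul_mem hy₂ hx) (y₁ * x) (mul_mem hy₁ hx) 0 (zero_mem _) h1
      rw [zero_add, h2] at this
      rw [add_mul]
      exact this
    | neg y₁ hy₁ ih =>
      intro x hx hcx
      have h1 := ih x hx hcx
      have := hneg (y₁ * x) (mul_mem hy₁ hx) 0 (zero_mem _) h1
      rw [neg_zero] at this
      rw [neg_mul]
      exact this
    | mul y₁ y₂ hy₁ hy₂ ih₁ ih₂ =>
      intro x hx hcx
      rw [mul_assoc]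
      exact ih₁ (y₂ * x) (mul_mem hy₂ hx) (ih₂ x hx hcx)
  -- the ideal
  refine ⟨{ carrier := {x : ↥(Rn n) | c (x : ℂ) = c 0}
            zero_mem' := by simp
            add_mem' := by
              intro a b ha hb
              simp only [Set.mem_setOf_eq] at ha hb ⊢
              have := htrans (b : ℂ) b.2 (a : ℂ) a.2 0 (zero_mem _) ha
              rw [zero_add, hb] at this
              simpa using this
            smul_mem' := by
              intro r x hx
              simp only [Set.mem_setOf_eq] at hx ⊢
              have := hmul (r : ℂ) r.2 (x : ℂ) x.2 hx
              simpa using this }, fun x => Iff.rfl, ?_⟩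
  intro s
  obtain ⟨t, ht, hts⟩ := hsurj s
  refine ⟨⟨t, ht⟩, fun x => ?_⟩
  constructor
  · intro hx
    refine ⟨x - ⟨t, ht⟩, ?_, by ring⟩
    show c ((x : ℂ) - t) = c 0
    have := htrans (-t) (neg_mem ht) (x : ℂ) x.2 t ht (hx.trans hts.symm)
    rw [add_neg_cancel] at this
    simpa [sub_eq_add_neg] using this
  · rintro ⟨w, hw, rfl⟩
    show c ((w : ℂ) + t) = s
    have hw' : c (w : ℂ) = c 0 := hw
    have := htrans t ht (w : ℂ) w.2 0 (zero_mem _) hw'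
    rw [zero_add, hts] at this
    exact this
end

section
/- Let q be a nonzero Gaussian integer and let ℓ = q·conj(q) be its norm. (1) If no rational prime p with p ≡ 1 (mod 4) divides ℓ, then conj(q) ∈ q·ℤ[i], so the colouring of ℤ[i] induced by q·ℤ[i] is perfect. (2) If q = m, or q = i·m, or q = (1 + i)^k·m, or q = (1 − i)^k·m for some nonzero integers m and k, then conj(q) ∈ q·ℤ[i] and the colouring is perfect. (3) In all other cases conj(q) ∉ q·ℤ[i], and the colouring is chirally perfect but not perfect. -/
open Complex

/-- The Gaussian integers `ℤ[i]` as a subring of `ℂ`. -/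
noncomputable def RG : Subring ℂ := Subring.closure {Complex.I}

/-- `z ∈ ℂ` lies in the ideal `I` of `ℤ[i]` (viewed inside `ℂ`). -/
def InIdealG (I : Ideal ↥RG) (z : ℂ) : Prop := ∃ w : ↥RG, w ∈ I ∧ (w : ℂ) = z

/-- `g` is a colour symmetry of the colouring of `ℤ[i]` induced by the ideal `I`. -/
def IsColourSymG (I : Ideal ↥RG) (g : ℂ → ℂ) : Prop :=
  ∀ x y : ℂ, x ∈ RG → y ∈ RG → (InIdealG I (x - y) ↔ InIdealG I (g x - g y))

/-- The colouring of `ℤ[i]` induced by `I` is perfect. -/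
def IsPerfectColouringG (I : Ideal ↥RG) : Prop :=
  ∀ g : ℂ → ℂ, IsIsometry g → g '' (RG : Set ℂ) = (RG : Set ℂ) → IsColourSymG I g

/-- The colouring of `ℤ[i]` induced by `I` is chirally perfect. -/
def IsChirallyPerfectColouringG (I : Ideal ↥RG) : Prop :=
  ∀ g : ℂ → ℂ, IsOPIsometry g → g '' (RG : Set ℂ) = (RG : Set ℂ) → IsColourSymG I g

lemma mem_RG_iff {z : ℂ} : z ∈ RG ↔ ∃ x y : ℤ, z = (x:ℂ) + (y:ℂ) * Complex.I := by
  constructor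
  · intro hz
    induction hz using Subring.closure_induction with
    | mem w hw => exact ⟨0, 1, by simp [Set.mem_singleton_iff.mp hw]⟩
    | zero => exact ⟨0, 0, by simp⟩
    | one => exact ⟨1, 0, by simp⟩
    | add a b _ _ ha hb =>
      obtain ⟨x1, y1, rfl⟩ := ha; obtain ⟨x2, y2, rfl⟩ := hb
      exact ⟨x1 + x2, y1 + y2, by push_cast; ring⟩
    | neg a _ ha =>
      obtain ⟨x1, y1, rfl⟩ := ha
      exact ⟨-x1, -y1, by push_cast; ring⟩
    | mul a b _ _ ha hb =>
      obtain ⟨x1, y1, rfl⟩ := ha; obtain ⟨x2, y2, rfl⟩ := hb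
      refine ⟨x1*x2 - y1*y2, x1*y2 + x2*y1, ?_⟩
      have h := Complex.I_sq
      push_cast
      linear_combination (y1*y2 : ℂ) * Complex.I_sq
  · rintro ⟨x, y, rfl⟩
    exact add_mem (intCast_mem RG x) (mul_mem (intCast_mem RG y) (Subring.subset_closure rfl))

lemma conj_mem_RG {z : ℂ} (hz : z ∈ RG) : (starRingEnd ℂ) z ∈ RG := by
  obtain ⟨x, y, rfl⟩ := mem_RG_iff.mp hz
  rw [mem_RG_iff]
  exact ⟨x, -y, by push_cast [map_add, map_mul, Complex.conj_I, map_intCast]; ring⟩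

lemma eqZI {a b c d : ℤ} (h : (a:ℂ) + (b:ℂ) * Complex.I = (c:ℂ) + (d:ℂ) * Complex.I) :
    a = c ∧ b = d := by
  have hre := congrArg Complex.re h
  have him := congrArg Complex.im h
  simp at hre him
  exact ⟨by exact_mod_cast hre, by exact_mod_cast him⟩


lemma aux_L1 (l : ℕ) : ∀ x y : ℤ, x^2 + y^2 = (l:ℤ) →
    (∀ p : ℕ, p.Prime → p % 4 = 1 → ¬ (p ∣ l)) →
    (l:ℤ) ∣ x^2 - y^2 ∧ (l:ℤ) ∣ 2*(x*y) := by
  induction l using Nat.strong_induction_on with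
  | _ l IH =>
  intro x y hxy hp
  rcases Nat.lt_or_ge l 2 with hl | hl
  · interval_cases l
    · have hxy0 : x^2 + y^2 = 0 := by exact_mod_cast hxy
      have hx : x = 0 := by nlinarith
      have hy : y = 0 := by nlinarith
      simp [hx, hy]
    · exact ⟨one_dvd _, one_dvd _⟩
  · set p := l.minFac with hpdef
    have hpp : p.Prime := Nat.minFac_prime (by omega)
    have hpd : p ∣ l := Nat.minFac_dvd l
    have hpne1 : p % 4 ≠ 1 := fun h => hp p hpp h hpd
    by_cases hp2 : p = 2
    · obtain ⟨m, hm⟩ := hpd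
      rw [hp2] at hm
      have hmz : (l:ℤ) = 2 * m := by exact_mod_cast congrArg (Nat.cast : ℕ → ℤ) hm
      have h2d : (2:ℤ) ∣ x + y := by
        obtain ⟨u, hu⟩ := Int.even_mul_succ_self x
        obtain ⟨v, hv⟩ := Int.even_mul_succ_self y
        exact ⟨u + v - m, by nlinarith⟩
      obtain ⟨s, hs⟩ := h2d
      set t := s - y with ht
      have hx' : x = s + t := by omega
      have hy' : y = s - t := by omega
      have hm2 : s^2 + t^2 = (m:ℤ) := by
        have h2 : (2:ℤ) * (s^2 + t^2) = 2 * m := by rw [← hmz, ← hxy, hx', hy']; ring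
        linarith
      have hm0 : 0 < m := by omega
      have hmlt : m < l := by omega
      have hp' : ∀ p' : ℕ, p'.Prime → p' % 4 = 1 → ¬ (p' ∣ m) :=
        fun p' h1 h2 h3 => hp p' h1 h2 (h3.trans ⟨2, by omega⟩)
      obtain ⟨d1, d2⟩ := IH m hmlt s t hm2 hp'
      obtain ⟨c1, hc1⟩ := d1
      obtain ⟨c2, hc2⟩ := d2
      constructor
      · exact ⟨c2, by rw [hx', hy', hmz]; linear_combination 2*hc2⟩
      · exact ⟨c1, by rw [hx', hy', hmz]; linear_combination 2*hc1⟩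
    · have hp4 : p % 4 = 3 := by
        rcases hpp.eq_two_or_odd with h | h
        · exact absurd h hp2
        · omega
      haveI : Fact p.Prime := ⟨hpp⟩
      have hnsq : ¬ IsSquare (-1 : ZMod p) := by
        rw [ZMod.exists_sq_eq_neg_one_iff]
        omega
      have hdvd : ((x^2 + y^2 : ℤ) : ZMod p) = 0 := by
        rw [hxy]
        exact_mod_cast (ZMod.natCast_eq_zero_iff l p).mpr hpd
      push_cast at hdvd
      have hx0 : (x : ZMod p) = 0 ∧ (y : ZMod p) = 0 := by
        by_cases hy0 : (y : ZMod p) = 0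
        · refine ⟨?_, hy0⟩
          have : (x : ZMod p)^2 = 0 := by rw [hy0] at hdvd; simpa using hdvd
          exact pow_eq_zero_iff (n := 2) (by norm_num) |>.mp this
        · exfalso
          apply hnsq
          refine ⟨(x : ZMod p) / y, ?_⟩
          field_simp
          linear_combination -hdvd
      obtain ⟨x', rfl⟩ : (p:ℤ) ∣ x := (ZMod.intCast_zmod_eq_zero_iff_dvd x p).mp hx0.1
      obtain ⟨y', rfl⟩ : (p:ℤ) ∣ y := (ZMod.intCast_zmod_eq_zero_iff_dvd y p).mp hx0.2
      have hd : (p^2 : ℕ) ∣ l := by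
        have : ((p:ℤ))^2 ∣ (l:ℤ) := ⟨x'^2 + y'^2, by linear_combination -hxy⟩
        exact_mod_cast this
      obtain ⟨m, hm⟩ := hd
      have hmz : (l:ℤ) = (p:ℤ)^2 * m := by exact_mod_cast congrArg (Nat.cast : ℕ → ℤ) hm
      have hppos : 0 < p := hpp.pos
      have hm2 : x'^2 + y'^2 = (m:ℤ) := by
        have h := hxy
        rw [hmz] at h
        have : (p:ℤ)^2 * (x'^2 + y'^2) = (p:ℤ)^2 * m := by linear_combination h
        exact mul_left_cancel₀ (by positivity : ((p:ℤ)^2 ≠ 0)) this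
      have hm0 : 0 < m := by
        rcases Nat.eq_zero_or_pos m with h | h
        · rw [h, Nat.mul_zero] at hm; omega
        · exact h
      have hmlt : m < l := by
        have hp3 : 3 ≤ p := by omega
        have h9 : 9 * m ≤ l := by
          rw [hm]; exact Nat.mul_le_mul_right m (by nlinarith : 9 ≤ p^2)
        omega
      have hp' : ∀ p' : ℕ, p'.Prime → p' % 4 = 1 → ¬ (p' ∣ m) :=
        fun p' h1 h2 h3 => hp p' h1 h2 (h3.trans ⟨p^2, by rw [hm]; ring⟩)
      obtain ⟨d1, d2⟩ := IH m hmlt x' y' hm2 hp'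
      obtain ⟨c1, hc1⟩ := d1
      obtain ⟨c2, hc2⟩ := d2
      exact ⟨⟨c1, by rw [hmz]; linear_combination (p:ℤ)^2*hc1⟩,
             ⟨c2, by rw [hmz]; linear_combination (p:ℤ)^2*hc2⟩⟩

lemma aux_unit4_mem {u : ℂ} (h : u = 1 ∨ u = -1 ∨ u = Complex.I ∨ u = -Complex.I) : u ∈ RG := by
  have hI : Complex.I ∈ RG := Subring.subset_closure rfl
  rcases h with h | h | h | h <;> subst h
  · exact one_mem _
  · exact neg_mem (one_mem _)
  · exact hI
  · exact neg_mem hI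

lemma aux_units_RG {a : ℂ} (ha : a ∈ RG) (h1 : ‖a‖ = 1) :
    a = 1 ∨ a = -1 ∨ a = Complex.I ∨ a = -Complex.I := by
  obtain ⟨x, y, rfl⟩ := mem_RG_iff.mp ha
  have hn : Complex.normSq ((x:ℂ) + (y:ℂ) * Complex.I) = 1 := by
    rw [← Complex.sq_norm, h1]; norm_num
  have hn2 : Complex.normSq ((x:ℂ) + (y:ℂ) * Complex.I) = (x:ℝ)^2 + (y:ℝ)^2 := by
    simp only [← Complex.ofReal_intCast]
    exact Complex.normSq_add_mul_I _ _
  have h3 : x^2 + y^2 = 1 := by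
    have : (x:ℝ)^2 + (y:ℝ)^2 = 1 := by linarith [hn, hn2]
    exact_mod_cast this
  have hx1 : -1 ≤ x ∧ x ≤ 1 := by constructor <;> nlinarith
  have hy1 : -1 ≤ y ∧ y ≤ 1 := by constructor <;> nlinarith
  obtain ⟨hx1, hx2⟩ := hx1
  obtain ⟨hy1, hy2⟩ := hy1
  interval_cases x <;> interval_cases y <;> revert h3 <;> norm_num

lemma aux_I_pow_cases (n : ℕ) :
    Complex.I ^ n = 1 ∨ Complex.I ^ n = -1 ∨ Complex.I ^ n = Complex.I ∨
      Complex.I ^ n = -Complex.I := by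
  induction n using Nat.strong_induction_on with
  | _ n IH =>
  rcases Nat.lt_or_ge n 4 with h | h
  · interval_cases n
    · exact Or.inl (by norm_num)
    · exact Or.inr (Or.inr (Or.inl (by norm_num)))
    · exact Or.inr (Or.inl Complex.I_sq)
    · refine Or.inr (Or.inr (Or.inr ?_))
      rw [show (3:ℕ) = 2 + 1 from rfl, pow_succ, Complex.I_sq]; ring
  · obtain ⟨m, rfl⟩ : ∃ m, n = m + 4 := ⟨n - 4, by omega⟩
    rw [pow_add, Complex.I_pow_four, mul_one]
    exact IH m (by omega)

lemma aux_I_zpow_cases (k : ℤ) :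
    Complex.I ^ k = 1 ∨ Complex.I ^ k = -1 ∨ Complex.I ^ k = Complex.I ∨
      Complex.I ^ k = -Complex.I := by
  rcases Int.eq_nat_or_neg k with ⟨n, rfl | rfl⟩
  · rw [zpow_natCast]; exact aux_I_pow_cases n
  · rw [zpow_neg, zpow_natCast]
    rcases aux_I_pow_cases n with h | h | h | h <;> rw [h]
    · exact Or.inl (by norm_num)
    · exact Or.inr (Or.inl (by norm_num))
    · exact Or.inr (Or.inr (Or.inr (by rw [Complex.inv_I])))
    · exact Or.inr (Or.inr (Or.inl (by rw [inv_neg, Complex.inv_I, neg_neg])))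

lemma aux_negI_zpow_cases (k : ℤ) :
    (-Complex.I) ^ k = 1 ∨ (-Complex.I) ^ k = -1 ∨ (-Complex.I) ^ k = Complex.I ∨
      (-Complex.I) ^ k = -Complex.I := by
  have hc : (-Complex.I) ^ k = (starRingEnd ℂ) (Complex.I ^ k) := by
    rw [map_zpow₀, Complex.conj_I]
  rcases aux_I_zpow_cases k with h | h | h | h <;> rw [hc, h]
  · exact Or.inl (by simp)
  · exact Or.inr (Or.inl (by simp))
  · exact Or.inr (Or.inr (Or.inr (by simp [Complex.conj_I])))
  · exact Or.inr (Or.inr (Or.inl (by simp [Complex.conj_I])))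

lemma aux_inIdealG_span_iff (q : ↥RG) (z : ℂ) :
    InIdealG (Ideal.span {q}) z ↔ ∃ c : ℂ, c ∈ RG ∧ z = (q:ℂ) * c := by
  constructor
  · rintro ⟨w, hw, rfl⟩
    obtain ⟨c, rfl⟩ := Ideal.mem_span_singleton.mp hw
    exact ⟨(c:ℂ), c.2, by push_cast; ring⟩
  · rintro ⟨c, hc, rfl⟩
    exact ⟨q * ⟨c, hc⟩, Ideal.mem_span_singleton.mpr (dvd_mul_right _ _), by push_cast; ring⟩

lemma aux_unit_mul_iff (q : ↥RG) {a : ℂ} (ha : a ∈ RG) (h1 : ‖a‖ = 1) (z : ℂ) :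
    InIdealG (Ideal.span {q}) z ↔ InIdealG (Ideal.span {q}) (a * z) := by
  have hconj : (starRingEnd ℂ) a * a = 1 := by
    rw [mul_comm, Complex.mul_conj]
    rw [Complex.normSq_eq_norm_sq, h1]
    norm_num
  rw [aux_inIdealG_span_iff, aux_inIdealG_span_iff]
  constructor
  · rintro ⟨c, hc, rfl⟩
    exact ⟨a * c, mul_mem ha hc, by ring⟩
  · rintro ⟨c, hc, h⟩
    refine ⟨(starRingEnd ℂ) a * c, mul_mem (conj_mem_RG ha) hc, ?_⟩
    calc z = ((starRingEnd ℂ) a * a) * z := by rw [hconj]; ring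
    _ = (starRingEnd ℂ) a * (a * z) := by ring
    _ = (q:ℂ) * ((starRingEnd ℂ) a * c) := by rw [h]; ring

lemma aux_conj_iff (q : ↥RG)
    (hu : ∃ u : ℂ, u ∈ RG ∧ (starRingEnd ℂ) (q:ℂ) = (q:ℂ) * u) (z : ℂ) :
    InIdealG (Ideal.span {q}) z ↔ InIdealG (Ideal.span {q}) ((starRingEnd ℂ) z) := by
  obtain ⟨u, huR, hequ⟩ := hu
  rw [aux_inIdealG_span_iff, aux_inIdealG_span_iff]
  constructor
  · rintro ⟨c, hc, rfl⟩
    exact ⟨u * (starRingEnd ℂ) c, mul_mem huR (conj_mem_RG hc), by rw [map_mul, hequ]; ring⟩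
  · rintro ⟨c, hc, h⟩
    refine ⟨u * (starRingEnd ℂ) c, mul_mem huR (conj_mem_RG hc), ?_⟩
    have h2 := congrArg (starRingEnd ℂ) h
    rw [Complex.conj_conj, map_mul] at h2
    rw [h2, hequ]; ring

lemma aux_chirally_perfect (q : ↥RG) : IsChirallyPerfectColouringG (Ideal.span {q}) := by
  rintro g ⟨a, b, habs, hgf⟩ himg x y hx hy
  have haR : a ∈ RG := by
    have h1 : g 1 ∈ RG := by have : g 1 ∈ g '' (RG : Set ℂ) := Set.mem_image_of_mem g (one_mem RG); rwa [himg] at this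
    have h0 : g 0 ∈ RG := by have : g 0 ∈ g '' (RG : Set ℂ) := Set.mem_image_of_mem g (zero_mem RG); rwa [himg] at this
    have hs := sub_mem h1 h0
    rw [hgf 1, hgf 0] at hs
    simpa using hs
  have hsub : g x - g y = a * (x - y) := by rw [hgf x, hgf y]; ring
  rw [hsub]
  exact aux_unit_mul_iff q haR habs _

lemma aux_perfect_of (q : ↥RG)
    (hu : ∃ u : ℂ, u ∈ RG ∧ (starRingEnd ℂ) (q:ℂ) = (q:ℂ) * u) :
    IsPerfectColouringG (Ideal.span {q}) := by
  rintro g ⟨a, b, habs, hca | hca⟩ himg x y hx hy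
  · exact aux_chirally_perfect q g ⟨a, b, habs, hca⟩ himg x y hx hy
  · have haR : a ∈ RG := by
      have h1 : g 1 ∈ RG := by have : g 1 ∈ g '' (RG : Set ℂ) := Set.mem_image_of_mem g (one_mem RG); rwa [himg] at this
      have h0 : g 0 ∈ RG := by have : g 0 ∈ g '' (RG : Set ℂ) := Set.mem_image_of_mem g (zero_mem RG); rwa [himg] at this
      have hs := sub_mem h1 h0
      rw [hca 1, hca 0] at hs
      simpa using hs
    have hsub : g x - g y = a * ((starRingEnd ℂ) (x - y)) := by
      rw [hca x, hca y, map_sub]; ring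
    rw [hsub]
    exact (aux_conj_iff q hu _).trans (aux_unit_mul_iff q haR habs _)

lemma aux_both_of (q : ↥RG)
    (hu : ∃ u : ℂ, u ∈ RG ∧ (starRingEnd ℂ) (q:ℂ) = (q:ℂ) * u) :
    InIdealG (Ideal.span {q}) ((starRingEnd ℂ) (q : ℂ)) ∧
      IsPerfectColouringG (Ideal.span {q}) := by
  obtain ⟨u, huR, hequ⟩ := hu
  exact ⟨(aux_inIdealG_span_iff q _).mpr ⟨u, huR, hequ⟩, aux_perfect_of q ⟨u, huR, hequ⟩⟩


lemma aux_conjZI (x y : ℤ) :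
    (starRingEnd ℂ) ((x:ℂ) + (y:ℂ) * Complex.I) = (x:ℂ) - (y:ℂ) * Complex.I := by
  push_cast [map_add, map_mul, Complex.conj_I, map_intCast]; ring

lemma aux_qC_ne (q : ↥RG) (hq : q ≠ 0) : (q:ℂ) ≠ 0 := by
  intro h; apply hq; exact Subtype.ext (by simpa using h)

lemma aux_part1 (q : ↥RG) (hq : q ≠ 0) (l : ℕ)
    (hl : (l : ℂ) = (q : ℂ) * (starRingEnd ℂ) (q : ℂ))
    (hp : ∀ p : ℕ, p.Prime → p % 4 = 1 → ¬ (p ∣ l)) :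
    ∃ u : ℂ, u ∈ RG ∧ (starRingEnd ℂ) (q:ℂ) = (q:ℂ) * u := by
  obtain ⟨x, y, hqxy⟩ := mem_RG_iff.mp q.2
  have hqC : (q:ℂ) ≠ 0 := aux_qC_ne q hq
  have hlint : (l:ℤ) = x^2 + y^2 := by
    have h1 : ((l:ℤ):ℂ) = ((x^2 + y^2 : ℤ):ℂ) := by
      push_cast
      rw [hl, hqxy, aux_conjZI]
      linear_combination (-(y:ℂ)^2) * Complex.I_sq
    exact_mod_cast h1
  have hl0 : l ≠ 0 := by
    intro h
    rw [h] at hlint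
    push_cast at hlint
    have hx : x = 0 := by nlinarith
    have hy : y = 0 := by nlinarith
    apply hqC
    rw [hqxy, hx, hy]; simp
  obtain ⟨d1, d2⟩ := aux_L1 l x y hlint.symm hp
  obtain ⟨a, ha⟩ := d1
  obtain ⟨b, hb⟩ := d2
  refine ⟨(a:ℂ) - (b:ℂ) * Complex.I, mem_RG_iff.mpr ⟨a, -b, by push_cast; ring⟩, ?_⟩
  have hlc : ((l:ℕ):ℂ) ≠ 0 := Nat.cast_ne_zero.mpr hl0
  apply mul_left_cancel₀ hlc
  rw [hqxy, aux_conjZI]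
  have ea : (x:ℂ)^2 - (y:ℂ)^2 = (l:ℂ) * a := by exact_mod_cast ha
  have eb : 2*((x:ℂ) * (y:ℂ)) = (l:ℂ) * b := by exact_mod_cast hb
  have hlc2 : (l:ℂ) = (x:ℂ)^2 + (y:ℂ)^2 := by exact_mod_cast hlint
  linear_combination ((x:ℂ) + (y:ℂ)*Complex.I) * ea +
    (-(x:ℂ)*Complex.I - (y:ℂ)*Complex.I^2) * eb +
    ((x:ℂ) - (y:ℂ)*Complex.I) * hlc2 + 2*(x:ℂ)*(y:ℂ)^2 * Complex.I_sq

lemma aux_part2 (q : ↥RG)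
    (h : ∃ m k : ℤ, m ≠ 0 ∧ k ≠ 0 ∧
        ((q : ℂ) = (m : ℂ) ∨ (q : ℂ) = Complex.I * (m : ℂ) ∨
          (q : ℂ) = (1 + Complex.I) ^ k * (m : ℂ) ∨
          (q : ℂ) = (1 - Complex.I) ^ k * (m : ℂ))) :
    ∃ u : ℂ, u ∈ RG ∧ (starRingEnd ℂ) (q:ℂ) = (q:ℂ) * u := by
  obtain ⟨m, k, hm, hk, hc⟩ := h
  rcases hc with h | h | h | h
  · exact ⟨1, one_mem _, by rw [h, map_intCast, mul_one]⟩
  · exact ⟨-1, neg_mem (one_mem _), by rw [h, map_mul, Complex.conj_I, map_intCast]; ring⟩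
  · refine ⟨(-Complex.I)^k, aux_unit4_mem (aux_negI_zpow_cases k), ?_⟩
    rw [h, map_mul, map_zpow₀, map_intCast]
    have h1 : (starRingEnd ℂ) (1 + Complex.I) = (1 + Complex.I) * (-Complex.I) := by
      rw [map_add, map_one, Complex.conj_I]
      linear_combination Complex.I_sq
    rw [h1, mul_zpow]
    ring
  · refine ⟨Complex.I^k, aux_unit4_mem (aux_I_zpow_cases k), ?_⟩
    rw [h, map_mul, map_zpow₀, map_intCast]
    have h1 : (starRingEnd ℂ) (1 - Complex.I) = (1 - Complex.I) * Complex.I := by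
      rw [map_sub, map_one, Complex.conj_I]
      linear_combination Complex.I_sq
    rw [h1, mul_zpow]
    ring

lemma aux_part3a (q : ↥RG) (hq : q ≠ 0)
    (hni : ¬ (∃ m k : ℤ, m ≠ 0 ∧ k ≠ 0 ∧
        ((q : ℂ) = (m : ℂ) ∨ (q : ℂ) = Complex.I * (m : ℂ) ∨
          (q : ℂ) = (1 + Complex.I) ^ k * (m : ℂ) ∨
          (q : ℂ) = (1 - Complex.I) ^ k * (m : ℂ)))) :
    ¬ InIdealG (Ideal.span {q}) ((starRingEnd ℂ) (q : ℂ)) := by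
  intro hIn
  obtain ⟨c, hcR, hcq⟩ := (aux_inIdealG_span_iff q _).mp hIn
  have hqC : (q:ℂ) ≠ 0 := aux_qC_ne q hq
  have hq0 : ‖(q:ℂ)‖ ≠ 0 := norm_ne_zero_iff.mpr hqC
  have habs : ‖c‖ = 1 := by
    have h := congrArg (‖·‖) hcq
    rw [norm_mul, Complex.norm_conj] at h
    exact mul_left_cancel₀ hq0 (h.symm.trans (mul_one _).symm)
  obtain ⟨x, y, hqxy⟩ := mem_RG_iff.mp q.2
  rcases aux_units_RG hcR habs with h | h | h | h <;> subst h
  · rw [hqxy, aux_conjZI, mul_one] at hcq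
    have heq : (x:ℂ) + ((-y : ℤ):ℂ)*Complex.I = (x:ℂ) + (y:ℂ)*Complex.I := by
      push_cast; linear_combination hcq
    obtain ⟨-, hy⟩ := eqZI heq
    have hy0 : y = 0 := by omega
    apply hni
    refine ⟨x, 1, ?_, one_ne_zero, Or.inl ?_⟩
    · intro h0; apply hqC; rw [hqxy, h0, hy0]; simp
    · rw [hqxy, hy0]; simp
  · rw [hqxy, aux_conjZI] at hcq
    have heq : (x:ℂ) + ((-y : ℤ):ℂ)*Complex.I = ((-x : ℤ):ℂ) + ((-y : ℤ):ℂ)*Complex.I := by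
      push_cast; linear_combination hcq
    obtain ⟨hx, -⟩ := eqZI heq
    have hx0 : x = 0 := by omega
    apply hni
    refine ⟨y, 1, ?_, one_ne_zero, Or.inr (Or.inl ?_)⟩
    · intro h0; apply hqC; rw [hqxy, hx0, h0]; simp
    · rw [hqxy, hx0]; push_cast; ring
  · rw [hqxy, aux_conjZI] at hcq
    have heq : (x:ℂ) + ((-y : ℤ):ℂ)*Complex.I = ((-y : ℤ):ℂ) + (x:ℂ)*Complex.I := by
      push_cast
      linear_combination hcq + (y:ℂ) * Complex.I_sq
    obtain ⟨hx, -⟩ := eqZI heq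
    apply hni
    refine ⟨x, 1, ?_, one_ne_zero, Or.inr (Or.inr (Or.inr ?_))⟩
    · intro h0
      apply hqC
      have hy0 : y = 0 := by omega
      rw [hqxy, h0, hy0]; simp
    · rw [hqxy, zpow_one]
      have hyx : y = -x := by omega
      rw [hyx]; push_cast; ring
  · rw [hqxy, aux_conjZI] at hcq
    have heq : (x:ℂ) + ((-y : ℤ):ℂ)*Complex.I = (y:ℂ) + ((-x : ℤ):ℂ)*Complex.I := by
      push_cast
      linear_combination hcq - (y:ℂ) * Complex.I_sq
    obtain ⟨hx, -⟩ := eqZI heq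
    apply hni
    refine ⟨x, 1, ?_, one_ne_zero, Or.inr (Or.inr (Or.inl ?_))⟩
    · intro h0
      apply hqC
      have hy0 : y = 0 := by omega
      rw [hqxy, h0, hy0]; simp
    · rw [hqxy, zpow_one]
      have hyx : y = x := by omega
      rw [hyx]; push_cast; ring

lemma aux_not_perfect (q : ↥RG)
    (hnot : ¬ InIdealG (Ideal.span {q}) ((starRingEnd ℂ) (q:ℂ))) :
    ¬ IsPerfectColouringG (Ideal.span {q}) := by
  intro hperf
  have hiso : IsIsometry (fun z => (starRingEnd ℂ) z) :=
    ⟨1, 0, by simp, Or.inr fun z => by simp⟩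
  have himg : (fun z => (starRingEnd ℂ) z) '' (RG : Set ℂ) = (RG : Set ℂ) := by
    ext z
    constructor
    · rintro ⟨w, hw, rfl⟩; exact conj_mem_RG hw
    · intro hz; exact ⟨(starRingEnd ℂ) z, conj_mem_RG hz, Complex.conj_conj z⟩
  have hcs := hperf _ hiso himg (q:ℂ) 0 q.2 (zero_mem RG)
  apply hnot
  have hqin : InIdealG (Ideal.span {q}) ((q:ℂ) - 0) := by
    rw [sub_zero]
    exact (aux_inIdealG_span_iff q _).mpr ⟨1, one_mem _, (mul_one _).symm⟩
  have hres := hcs.mp hqin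
  simpa using hres

/-- colourings of the square lattice `ℤ[i]` induced by `(q)`, with
`ℓ = q conj(q)` colours: (1) if no rational prime `p ≡ 1 (mod 4)` divides `ℓ`, the
colouring is perfect; (2) if `q = m`, `q = i m`, `q = (1+i)^k m` or `q = (1-i)^k m`
with `m, k` nonzero integers, it is perfect; (3) otherwise it is chirally perfect but
not perfect. -/
theorem stmt6 (q : ↥RG) (hq : q ≠ 0) (ℓ : ℕ)
    (hℓ : (ℓ : ℂ) = (q : ℂ) * (starRingEnd ℂ) (q : ℂ)) :
    ((∀ p : ℕ, p.Prime → p % 4 = 1 → ¬ (p ∣ ℓ)) →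
      InIdealG (Ideal.span {q}) ((starRingEnd ℂ) (q : ℂ)) ∧
        IsPerfectColouringG (Ideal.span {q})) ∧
    ((∃ m k : ℤ, m ≠ 0 ∧ k ≠ 0 ∧
        ((q : ℂ) = (m : ℂ) ∨ (q : ℂ) = Complex.I * (m : ℂ) ∨
          (q : ℂ) = (1 + Complex.I) ^ k * (m : ℂ) ∨
          (q : ℂ) = (1 - Complex.I) ^ k * (m : ℂ))) →
      InIdealG (Ideal.span {q}) ((starRingEnd ℂ) (q : ℂ)) ∧
        IsPerfectColouringG (Ideal.span {q})) ∧
    ((¬ (∀ p : ℕ, p.Prime → p % 4 = 1 → ¬ (p ∣ ℓ))) →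
      (¬ (∃ m k : ℤ, m ≠ 0 ∧ k ≠ 0 ∧
        ((q : ℂ) = (m : ℂ) ∨ (q : ℂ) = Complex.I * (m : ℂ) ∨
          (q : ℂ) = (1 + Complex.I) ^ k * (m : ℂ) ∨
          (q : ℂ) = (1 - Complex.I) ^ k * (m : ℂ)))) →
      ¬ InIdealG (Ideal.span {q}) ((starRingEnd ℂ) (q : ℂ)) ∧
        IsChirallyPerfectColouringG (Ideal.span {q}) ∧
        ¬ IsPerfectColouringG (Ideal.span {q})) := by
  refine ⟨?_, ?_, ?_⟩
  · intro hp
    exact aux_both_of q (aux_part1 q hq ℓ hℓ hp)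
  · intro h
    exact aux_both_of q (aux_part2 q h)
  · intro _ hni
    have h3a := aux_part3a q hq hni
    exact ⟨h3a, aux_chirally_perfect q, aux_not_perfect q h3a⟩
end

section
/- Let I be an ideal of R with card(R/I) = 2. Let H be the group (under composition) of all colour symmetries of the colouring induced by I, and let K be the colour preserving group; K is a normal subgroup of H. Then the short exact sequence 1 → K → H → H/K → 1 splits: there exists a group homomorphism s : H/K → H such that the canonical projection H → H/K composed with s is the identity on H/K. In other words, H is a semidirect product K ⋊ H/K. -/
open Complex

/-- for a `2`-colouring, the short exact sequence `1 → K → H → H/K → 1`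
splits, i.e. `H = K ⋊ H/K`. -/
theorem stmt7 (n : ℕ) (hn : 3 ≤ n) (hn2 : n % 4 ≠ 2) (I : Ideal ↥(Rn n))
    (hcard : Nat.card (↥(Rn n) ⧸ I) = 2)
    (H : Subgroup (Equiv.Perm ℂ))
    (hH : ∀ g : Equiv.Perm ℂ, g ∈ H ↔
      (IsIsometry ⇑g ∧ ⇑g '' (Rn n : Set ℂ) = (Rn n : Set ℂ) ∧ IsColourSym n I ⇑g))
    (K : Subgroup ↥H)
    (hK : ∀ g : ↥H, g ∈ K ↔ ∀ x ∈ (Rn n : Set ℂ), InIdeal n I ((g : Equiv.Perm ℂ) x - x))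
    [hKn : K.Normal] :
    ∃ s : (↥H ⧸ K) →* ↥H, ∀ x : ↥H ⧸ K, (QuotientGroup.mk (s x) : ↥H ⧸ K) = x := by
    classical
  -- transfer `InIdeal` to ideal membership in the subring
  have hmem : ∀ (z : ℂ) (hz : z ∈ Rn n), InIdeal n I z ↔ (⟨z, hz⟩ : ↥(Rn n)) ∈ I := by
    intro z hz
    constructor
    · rintro ⟨w, hw, hwz⟩
      have hzw : (⟨z, hz⟩ : ↥(Rn n)) = w := Subtype.ext hwz.symm
      rwa [hzw]
    · intro h; exact ⟨⟨z, hz⟩, h, rfl⟩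
  have hIne : (1 : ↥(Rn n)) ∉ I := by
    intro h
    have htop : I = ⊤ := (Ideal.eq_top_iff_one I).mpr h
    have : Subsingleton (↥(Rn n) ⧸ I) := by
      rw [htop]; infer_instance
    have h1 : Nat.card (↥(Rn n) ⧸ I) = 1 := by
      have : Unique (↥(Rn n) ⧸ I) := ⟨⟨0⟩, fun a => Subsingleton.elim a 0⟩
      exact Nat.card_unique
    omega
  have htwo : ∀ z w : ↥(Rn n), z ∉ I → w ∉ I → z - w ∈ I := by
    intro z w hz hw
    obtain ⟨a, b, hab, hset⟩ := Nat.card_eq_two_iff.mp hcard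
    have hall : ∀ c : ↥(Rn n) ⧸ I, c = a ∨ c = b := by
      intro c
      have hc : c ∈ ({a, b} : Set _) := by rw [hset]; trivial
      simpa using hc
    have hz0 : (Ideal.Quotient.mk I z) ≠ 0 := fun h => hz (Ideal.Quotient.eq_zero_iff_mem.mp h)
    have hw0 : (Ideal.Quotient.mk I w) ≠ 0 := fun h => hw (Ideal.Quotient.eq_zero_iff_mem.mp h)
    have hzw : Ideal.Quotient.mk I z = Ideal.Quotient.mk I w := by
      rcases hall 0 with h0 | h0
      · rcases hall (Ideal.Quotient.mk I z) with h1 | h1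
        · exact absurd (h1.trans h0.symm) hz0
        · rcases hall (Ideal.Quotient.mk I w) with h2 | h2
          · exact absurd (h2.trans h0.symm) hw0
          · exact h1.trans h2.symm
      · rcases hall (Ideal.Quotient.mk I z) with h1 | h1
        · rcases hall (Ideal.Quotient.mk I w) with h2 | h2
          · exact h1.trans h2.symm
          · exact absurd (h2.trans h0.symm) hw0
        · exact absurd (h1.trans h0.symm) hz0
    exact Ideal.Quotient.eq.mp hzw
  have h2I : (2 : ↥(Rn n)) ∈ I := by
    by_contra h2
    have := htwo 2 1 h2 hIne
    norm_num at this
    exact hIne this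
  -- for `g ∈ H`, a lift to a map on the subring
  have himg : ∀ g : ↥H, ∀ z ∈ Rn n, (g : Equiv.Perm ℂ) z ∈ Rn n := by
    intro g z hz
    have hgR := ((hH g).mp g.2).2.1
    have : (g : Equiv.Perm ℂ) z ∈ (⇑(g : Equiv.Perm ℂ)) '' (Rn n : Set ℂ) := ⟨z, hz, rfl⟩
    rwa [hgR] at this
  -- dichotomy: a colour symmetry either fixes all colours or swaps them everywhere
  have hdich : ∀ g : ↥H,
      (∀ z : ↥(Rn n), (⟨(g : Equiv.Perm ℂ) z, himg g z z.2⟩ - z : ↥(Rn n)) ∈ I) ∨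
      (∀ z : ↥(Rn n), (⟨(g : Equiv.Perm ℂ) z, himg g z z.2⟩ - z : ↥(Rn n)) ∉ I) := by
    intro g
    by_contra hcon
    push_neg at hcon
    obtain ⟨⟨y, hy⟩, x, hx⟩ := hcon
    set gx : ↥(Rn n) := ⟨(g : Equiv.Perm ℂ) x, himg g x x.2⟩ with hgx
    set gy : ↥(Rn n) := ⟨(g : Equiv.Perm ℂ) y, himg g y y.2⟩ with hgy
    have hcs := ((hH g).mp g.2).2.2
    have hcs' : (x - y : ↥(Rn n)) ∈ I ↔ (gx - gy : ↥(Rn n)) ∈ I := by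
      have := hcs x y x.2 y.2
      rwa [hmem ((x : ℂ) - y) (sub_mem x.2 y.2),
        hmem ((g : Equiv.Perm ℂ) x - (g : Equiv.Perm ℂ) y) (sub_mem (himg g x x.2) (himg g y y.2))] at this
    by_cases hxy : (x - y : ↥(Rn n)) ∈ I
    · have h1 : (gx - gy : ↥(Rn n)) ∈ I := hcs'.mp hxy
      have : (gy - y : ↥(Rn n)) = (gx - x) + (x - y) - (gx - gy) := by ring
      rw [this] at hy
      exact hy (I.sub_mem (I.add_mem hx hxy) h1)
    · have h1 : (gx - gy : ↥(Rn n)) ∉ I := fun h => hxy (hcs'.mpr h)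
      have h2 : ((gx - gy) - (x - y) : ↥(Rn n)) ∈ I := htwo _ _ h1 hxy
      have : (gy - y : ↥(Rn n)) = (gx - x) - ((gx - gy) - (x - y)) := by ring
      rw [this] at hy
      exact hy (I.sub_mem hx h2)
  -- membership in K, in subring terms
  have hK' : ∀ g : ↥H, g ∈ K ↔
      ∀ z : ↥(Rn n), (⟨(g : Equiv.Perm ℂ) z, himg g z z.2⟩ - z : ↥(Rn n)) ∈ I := by
    intro g
    rw [hK g]
    constructor
    · intro h z
      have := h z z.2
      rwa [hmem _ (sub_mem (himg g z z.2) z.2)] at this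
    · intro h z hz
      rw [hmem _ (sub_mem (himg g z hz) hz)]
      have e : (⟨(g : Equiv.Perm ℂ) z - z, sub_mem (himg g z hz) hz⟩ : ↥(Rn n))
          = ⟨(g : Equiv.Perm ℂ) z, himg g z hz⟩ - ⟨z, hz⟩ := Subtype.ext rfl
      rw [e]
      exact h ⟨z, hz⟩
  have hnegmem : ∀ (z : ℂ) (hz : z ∈ Rn n) (hz' : -z ∈ Rn n),
      ((⟨z, hz⟩ : ↥(Rn n)) ∈ I ↔ (⟨-z, hz'⟩ : ↥(Rn n)) ∈ I) := by
    intro z hz hz'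
    have e : (⟨-z, hz'⟩ : ↥(Rn n)) = -(⟨z, hz⟩ : ↥(Rn n)) := Subtype.ext rfl
    rw [e]
    exact ⟨fun h => I.neg_mem h, fun h => by simpa using I.neg_mem h⟩
  -- the involution z ↦ 1 - z
  have hinv : Function.Involutive (fun z : ℂ => 1 - z) := fun z => by simp
  set g0p : Equiv.Perm ℂ := hinv.toPerm _ with hg0p
  have hg0papp : ∀ z : ℂ, g0p z = 1 - z := fun z => rfl
  have hg0H : g0p ∈ H := by
    rw [hH]
    refine ⟨⟨-1, 1, by simp, Or.inl fun z => by rw [hg0papp]; ring⟩, ?_, ?_⟩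
    · ext w
      constructor
      · rintro ⟨z, hz, rfl⟩
        rw [hg0papp]
        exact sub_mem (Rn n).one_mem hz
      · intro hw
        exact ⟨1 - w, sub_mem (Rn n).one_mem hw, by rw [hg0papp]; ring⟩
    · intro x y hx hy
      rw [hg0papp, hg0papp]
      have h1 : (1 : ℂ) - x - (1 - y) = -(x - y) := by ring
      rw [h1]
      have hneg : -((x : ℂ) - y) ∈ Rn n := neg_mem (sub_mem hx hy)
      rw [hmem _ (sub_mem hx hy), hmem _ hneg]
      exact hnegmem _ (sub_mem hx hy) hneg
  set g0 : ↥H := ⟨g0p, hg0H⟩ with hg0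
  have hg0sq : g0 * g0 = 1 := by
    apply Subtype.ext
    apply Equiv.ext
    intro z
    simp [hg0papp, hg0]
  -- key: every element of H is in K or in the coset of g0
  have key : ∀ g : ↥H, g ∈ K ∨ g * g0 ∈ K := by
    intro g
    rcases hdich g with h | h
    · left; exact (hK' g).mpr h
    · right
      rw [hK' (g * g0)]
      intro z
      have happ : ((g * g0 : ↥H) : Equiv.Perm ℂ) (z : ℂ) = (g : Equiv.Perm ℂ) (1 - z) := by
        simp [hg0papp, hg0]
      set u : ↥(Rn n) := 1 - z with hu
      have hgu : ((g * g0 : ↥H) : Equiv.Perm ℂ) (z : ℂ) = (g : Equiv.Perm ℂ) (u : ℂ) := by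
        rw [happ]; push_cast [hu]; ring_nf
      have hugood : (⟨((g * g0 : ↥H) : Equiv.Perm ℂ) (z : ℂ), himg (g * g0) z z.2⟩ : ↥(Rn n))
          = ⟨(g : Equiv.Perm ℂ) (u : ℂ), himg g u u.2⟩ := by
        apply Subtype.ext; exact hgu
      rw [hugood]
      have hgu' := h u
      -- 1 - 2z ∉ I
      have h12z : (1 - 2 * z : ↥(Rn n)) ∉ I := by
        intro hmem12
        apply hIne
        have : (1 : ↥(Rn n)) = (1 - 2 * z) + 2 * z := by ring
        rw [this]
        exact I.add_mem hmem12 (I.mul_mem_right z h2I)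
      have hdiff : ((⟨(g : Equiv.Perm ℂ) (u : ℂ), himg g u u.2⟩ - u : ↥(Rn n)) - (1 - 2 * z)) ∈ I :=
        htwo _ _ hgu' h12z
      have hrw : (⟨(g : Equiv.Perm ℂ) (u : ℂ), himg g u u.2⟩ - z : ↥(Rn n))
          = ((⟨(g : Equiv.Perm ℂ) (u : ℂ), himg g u u.2⟩ - u) - (1 - 2 * z)) + 2 * (1 - 2 * z) := by
        rw [hu]; ring
      rw [hrw]
      exact I.add_mem hdiff (I.mul_mem_right _ h2I)
  have hmkg0sq : (QuotientGroup.mk g0 : ↥H ⧸ K) * QuotientGroup.mk g0 = 1 := by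
    have h1 : (QuotientGroup.mk (g0 * g0) : ↥H ⧸ K) = QuotientGroup.mk 1 := by rw [hg0sq]
    simpa using h1
  have hcoset : ∀ x : ↥H ⧸ K, x = 1 ∨ x = QuotientGroup.mk g0 := by
    intro x
    induction x using QuotientGroup.induction_on with
    | H g =>
      rcases key g with h | h
      · left; exact (QuotientGroup.eq_one_iff g).mpr h
      · right
        have h1 : (QuotientGroup.mk g : ↥H ⧸ K) * QuotientGroup.mk g0 = 1 := by
          have h2 := (QuotientGroup.eq_one_iff (g * g0)).mpr h
          simpa using h2
        calc (QuotientGroup.mk g : ↥H ⧸ K)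
            = (QuotientGroup.mk g * QuotientGroup.mk g0) * QuotientGroup.mk g0 := by
              rw [mul_assoc, hmkg0sq, mul_one]
          _ = QuotientGroup.mk g0 := by rw [h1, one_mul]
  refine ⟨{ toFun := fun x => if x = 1 then 1 else g0,
            map_one' := if_pos rfl,
            map_mul' := ?_ }, ?_⟩
  · intro x y
    rcases hcoset x with hx | hx <;> rcases hcoset y with hy | hy <;> subst hx <;> subst hy
    · simp
    · simp
    · simp
    · by_cases hq1 : (QuotientGroup.mk g0 : ↥H ⧸ K) = 1
      · simp [hq1]
      · rw [if_neg hq1, if_pos hmkg0sq, hg0sq]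
  · intro x
    rcases hcoset x with hx | hx <;> subst hx
    · simp
    · by_cases hq1 : (QuotientGroup.mk g0 : ↥H ⧸ K) = 1
      · simp only [MonoidHom.coe_mk, OneHom.coe_mk]
        rw [if_pos hq1, hq1]
        simp
      · simp only [MonoidHom.coe_mk, OneHom.coe_mk]
        rw [if_neg hq1]
end

section
/- Let N = n if n is even and N = 2n if n is odd. Let I be an ideal of R such that ℓ = card(R/I) is finite and ℓ > N. Let H be the group (under composition) of all colour symmetries of the colouring induced by I, and let K be the colour preserving group (a normal subgroup of H). Then there is no group homomorphism s : H/K → H such that the canonical projection H → H/K composed with s is the identity on H/K; i.e., H is not a semidirect product K ⋊ H/K. -/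
open Complex

open Polynomial in
lemma arith_lemma {n m : ℕ} (hn : 0 < n) (hnm : n ∣ m) (hm : 0 < m)
    (h : Nat.totient m = Nat.totient n) : m ∣ (if n % 2 = 0 then n else 2 * n) := by
  obtain ⟨d, rfl⟩ := hnm
  have hd0 : 0 < d := Nat.pos_of_ne_zero (by rintro rfl; simp at hm)
  have hφn : 0 < Nat.totient n := Nat.totient_pos.2 hn
  have key : ∀ p : ℕ, p.Prime → p ∣ d → p = 2 ∧ n % 2 = 1 := by
    intro p hp hpd
    obtain ⟨e, rfl⟩ := hpd
    have hpn_dvd : p * n ∣ n * (p * e) := ⟨e, by ring⟩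
    have hdvd : Nat.totient (p * n) ∣ Nat.totient n := h ▸ Nat.totient_dvd_of_dvd hpn_dvd
    by_cases hpn : p ∣ n
    · exfalso
      rw [Nat.totient_mul_of_prime_of_dvd hp hpn] at hdvd
      have h1 := Nat.le_of_dvd hφn hdvd
      nlinarith [hp.two_le]
    · have hcop : Nat.Coprime p n := hp.coprime_iff_not_dvd.2 hpn
      rw [Nat.totient_mul hcop, Nat.totient_prime hp] at hdvd
      have h1 := Nat.le_of_dvd hφn hdvd
      have h2 : p - 1 ≤ 1 := Nat.le_of_mul_le_mul_right (by simpa using h1) hφn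
      have hp2 : p = 2 := by
        have := hp.two_le
        omega
      refine ⟨hp2, ?_⟩
      subst hp2
      omega
  have h4 : ¬ (4 ∣ d) := by
    intro h4
    obtain ⟨e, rfl⟩ := h4
    have hodd : n % 2 = 1 := (key 2 Nat.prime_two ⟨2 * e, by ring⟩).2
    have hcop : Nat.Coprime 4 n := by
      have : Nat.Coprime 2 n := Nat.prime_two.coprime_iff_not_dvd.2 (by omega)
      have h22 : (4 : ℕ) = 2 ^ 2 := by norm_num
      rw [h22]
      exact Nat.Coprime.pow_left 2 this
    have hdvd : Nat.totient (4 * n) ∣ Nat.totient n :=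
      h ▸ Nat.totient_dvd_of_dvd ⟨e, by ring⟩
    rw [Nat.totient_mul hcop, (by decide : Nat.totient 4 = 2)] at hdvd
    have h1 := Nat.le_of_dvd hφn hdvd
    omega
  by_cases hd1 : d = 1
  · subst hd1
    rw [Nat.mul_one]
    split
    · exact dvd_rfl
    · exact ⟨2, by ring⟩
  · obtain ⟨p, hp, hpd⟩ := Nat.exists_prime_and_dvd hd1
    obtain ⟨hp2, hodd⟩ := key p hp hpd
    subst hp2
    rw [if_neg (by omega)]
    obtain ⟨e, rfl⟩ := hpd
    by_cases he : e = 1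
    · subst he
      exact ⟨1, by ring⟩
    · obtain ⟨q, hq, hqe⟩ := Nat.exists_prime_and_dvd he
      have := (key q hq (hqe.mul_left 2)).1
      subst this
      exact absurd (by obtain ⟨f, rfl⟩ := hqe; exact ⟨f, by ring⟩) h4

open Polynomial in
lemma root_pow_N (n : ℕ) (hn : 3 ≤ n) {a : ℂ} (ha : a ∈ Rn n) {l : ℕ} (hl : l ≠ 0)
    (hal : a ^ l = 1) : a ^ (if n % 2 = 0 then n else 2 * n) = 1 := by
  have hn0 : n ≠ 0 := by omega
  have hζ : IsPrimitiveRoot (zeta n) n := Complex.isPrimitiveRoot_exp n hn0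
  have hfin : IsOfFinOrder a := isOfFinOrder_iff_pow_eq_one.mpr ⟨l, Nat.pos_of_ne_zero hl, hal⟩
  set k := orderOf a with hkdef
  have hk : IsPrimitiveRoot a k := IsPrimitiveRoot.orderOf a
  have hk0 : k ≠ 0 := by
    rw [hkdef]
    exact fun h => (orderOf_eq_zero_iff.mp h) hfin
  set m := Nat.lcm n k with hmdef
  have hm0 : m ≠ 0 := Nat.lcm_ne_zero hn0 hk0
  have hb := hζ.pow_mul_pow_lcm hk hn0 hk0
  set b := zeta n ^ (n / Nat.factorizationLCMLeft n k) * a ^ (k / Nat.factorizationLCMRight n k)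
    with hbdef
  set Kf := IntermediateField.adjoin ℚ {zeta n} with hKfdef
  have hζK : zeta n ∈ Kf := IntermediateField.subset_adjoin ℚ {zeta n} rfl
  have haK : a ∈ Kf := by
    have hle : Rn n ≤ Kf.toSubfield.toSubring :=
      Subring.closure_le.mpr (by simpa using hζK)
    exact hle ha
  have hbK : b ∈ Kf := mul_mem (pow_mem hζK _) (pow_mem haK _)
  have hint : IsIntegral ℚ (zeta n) := by
    refine ⟨X ^ n - C 1, monic_X_pow_sub_C 1 hn0, ?_⟩
    simp [hζ.pow_eq_one]
  haveI : FiniteDimensional ℚ Kf := IntermediateField.adjoin.finiteDimensional hint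
  have hfr : Module.finrank ℚ Kf = Nat.totient n := by
    have h1 : Module.finrank ℚ Kf = (minpoly ℚ (zeta n)).natDegree :=
      IntermediateField.adjoin.finrank hint
    rw [h1, ← cyclotomic_eq_minpoly_rat hζ (Nat.pos_of_ne_zero hn0), natDegree_cyclotomic]
  have hle : Nat.totient m ≤ Nat.totient n := by
    have h1 : minpoly ℚ (⟨b, hbK⟩ : Kf) = minpoly ℚ b := IntermediateField.minpoly_eq _
    have h2 := minpoly.natDegree_le (A := ℚ) (⟨b, hbK⟩ : Kf)
    rw [h1, ← cyclotomic_eq_minpoly_rat hb (Nat.pos_of_ne_zero hm0), natDegree_cyclotomic,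
      hfr] at h2
    exact h2
  have hdvdφ : Nat.totient n ∣ Nat.totient m := Nat.totient_dvd_of_dvd (Nat.dvd_lcm_left n k)
  have heq : Nat.totient m = Nat.totient n :=
    le_antisymm hle (Nat.le_of_dvd (Nat.totient_pos.2 (Nat.pos_of_ne_zero hm0)) hdvdφ)
  have hmN := arith_lemma (by omega) (Nat.dvd_lcm_left n k) (Nat.pos_of_ne_zero hm0) heq
  exact orderOf_dvd_iff_pow_eq_one.mp ((Nat.dvd_lcm_right n k).trans hmN)

lemma affine_pow (σ : Equiv.Perm ℂ) (a b : ℂ) (h : ∀ z, σ z = a * z + b) (m : ℕ) :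
    ∀ z, (σ ^ m) z = a ^ m * z + (∑ i ∈ Finset.range m, a ^ i) * b := by
  induction m with
  | zero => intro z; simp
  | succ m ih =>
    intro z
    rw [pow_succ, Equiv.Perm.mul_apply, h z, ih (a * z + b), Finset.sum_range_succ]
    ring

lemma translation_trivial (σ : Equiv.Perm ℂ) (b : ℂ) (h : ∀ z, σ z = z + b) {l : ℕ}
    (hl : l ≠ 0) (hσ : σ ^ l = 1) : b = 0 := by
  have h0 := affine_pow σ 1 b (fun z => by rw [h z]; ring) l 0
  rw [hσ] at h0
  simp only [Equiv.Perm.one_apply, one_pow, mul_zero, zero_add, Finset.sum_const,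
    Finset.card_range, nsmul_eq_mul, mul_one] at h0
  have hl' : (l : ℂ) ≠ 0 := Nat.cast_ne_zero.mpr hl
  field_simp at h0
  exact (mul_eq_zero.mp h0.symm).resolve_left hl'

lemma coeff_pow_eq_one (σ : Equiv.Perm ℂ) (a b : ℂ) (h : ∀ z, σ z = a * z + b) {l : ℕ}
    (hl : l ≠ 0) (hσ : σ ^ l = 1) : a ^ l = 1 := by
  have h0 := affine_pow σ a b h l 0
  have h1 := affine_pow σ a b h l 1
  rw [hσ] at h0 h1
  simp only [Equiv.Perm.one_apply, mul_zero, zero_add, mul_one] at h0 h1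
  linear_combination h0 - h1

lemma real_unit_pm {c : ℂ} (h1 : (starRingEnd ℂ) c = c) (h2 : ‖c‖ = 1) :
    c = 1 ∨ c = -1 := by
  have him : c.im = 0 := by
    have := congrArg Complex.im h1
    simp only [Complex.conj_im] at this
    linarith
  have hc : c = (c.re : ℂ) := Complex.ext rfl (by simp [him])
  rw [hc] at h2 ⊢
  rw [Complex.norm_real, Real.norm_eq_abs] at h2
  rcases (abs_eq (by norm_num : (0:ℝ) ≤ 1)).mp h2 with h | h <;> [left; right] <;>
    rw [h] <;> norm_num

set_option maxHeartbeats 1000000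

/-- if the number of colours `ℓ = card(R/I)` is finite and exceeds `N`
(`N = n` for `n` even, `N = 2n` for `n` odd), then `1 → K → H → H/K → 1` does not
split, i.e. `H ≠ K ⋊ H/K`. -/
theorem stmt8 (n : ℕ) (hn : 3 ≤ n) (hn2 : n % 4 ≠ 2) (I : Ideal ↥(Rn n))
    (hfin : Nat.card (↥(Rn n) ⧸ I) ≠ 0)
    (hcard : (if n % 2 = 0 then n else 2 * n) < Nat.card (↥(Rn n) ⧸ I))
    (H : Subgroup (Equiv.Perm ℂ))
    (hH : ∀ g : Equiv.Perm ℂ, g ∈ H ↔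
      (IsIsometry ⇑g ∧ ⇑g '' (Rn n : Set ℂ) = (Rn n : Set ℂ) ∧ IsColourSym n I ⇑g))
    (K : Subgroup ↥H)
    (hK : ∀ g : ↥H, g ∈ K ↔ ∀ x ∈ (Rn n : Set ℂ), InIdeal n I ((g : Equiv.Perm ℂ) x - x))
    [hKn : K.Normal] :
    ¬ ∃ s : (↥H ⧸ K) →* ↥H, ∀ x : ↥H ⧸ K, (QuotientGroup.mk (s x) : ↥H ⧸ K) = x := by
  rintro ⟨s, hs⟩
  classical
  haveI hfinQ : Finite (↥(Rn n) ⧸ I) := Nat.finite_of_card_ne_zero hfin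
  set N : ℕ := if n % 2 = 0 then n else 2 * n with hNdef
  set l : ℕ := Nat.card (↥(Rn n) ⧸ I) with hldef
  have hl0 : l ≠ 0 := hfin
  have hN4 : 4 ≤ N := by rw [hNdef]; split <;> omega
  -- translations belong to H
  have memH : ∀ w : ↥(Rn n), Equiv.addRight (w : ℂ) ∈ H := by
    intro w
    rw [hH]
    refine ⟨⟨1, w, by simp, Or.inl fun z => by simp [Equiv.coe_addRight]⟩, ?_, ?_⟩
    · ext z
      simp only [Set.mem_image, Equiv.coe_addRight, SetLike.mem_coe]
      constructor
      · rintro ⟨y, hy, rfl⟩; exact add_mem hy w.2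
      · intro hz; exact ⟨z - (w:ℂ), sub_mem hz w.2, by ring⟩
    · intro x y _ _
      simp only [Equiv.coe_addRight]
      rw [show x + (w:ℂ) - (y + (w:ℂ)) = x - y by ring]
  set g : ↥(Rn n) → ↥H := fun w => ⟨Equiv.addRight (w : ℂ), memH w⟩ with hgdef
  have gapp : ∀ (w : ↥(Rn n)) (z : ℂ), ((g w : ↥H) : Equiv.Perm ℂ) z = z + (w : ℂ) := by
    intro w z; simp [hgdef, Equiv.coe_addRight]
  have gadd : ∀ w v, g (w + v) = g w * g v := by
    intro w v
    apply Subtype.ext; apply Equiv.ext; intro z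
    show ((g (w + v) : ↥H) : Equiv.Perm ℂ) z = ((g w * g v : ↥H) : Equiv.Perm ℂ) z
    rw [gapp, Subgroup.coe_mul, Equiv.Perm.mul_apply, gapp, gapp]
    push_cast
    ring
  have g0 : g 0 = 1 := by
    apply Subtype.ext; apply Equiv.ext; intro z
    rw [gapp]
    simp
  set F : ↥(Rn n) → ↥H := fun w => s (QuotientGroup.mk (g w)) with hFdef
  have Fadd : ∀ w v, F (w + v) = F w * F v := by
    intro w v
    simp only [hFdef, gadd, QuotientGroup.mk_mul, map_mul]
  have F0 : F 0 = 1 := by simp only [hFdef, g0, QuotientGroup.mk_one, map_one]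
  -- membership in K for translations
  have gK : ∀ w : ↥(Rn n), w ∈ I → g w ∈ K := by
    intro w hw
    rw [hK]
    intro x _
    rw [gapp]
    exact ⟨w, hw, by ring⟩
  have Fconst : ∀ w v, w - v ∈ I → F w = F v := by
    intro w v hwv
    have : (QuotientGroup.mk (g w) : ↥H ⧸ K) = QuotientGroup.mk (g v) := by
      rw [QuotientGroup.eq]
      have : (g w)⁻¹ * g v = g (v - w) := by
        have h1 : g w * g (v - w) = g v := by rw [← gadd]; congr 1; ring
        rw [← h1]; group
      rw [this]
      exact gK _ (by simpa using neg_mem hwv)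
    simp only [hFdef, this]
  have Fsep : ∀ w v, F w = F v → w - v ∈ I := by
    intro w v hFwv
    have hmk : (QuotientGroup.mk (g w) : ↥H ⧸ K) = QuotientGroup.mk (g v) := by
      rw [← hs (QuotientGroup.mk (g w)), ← hs (QuotientGroup.mk (g v))]
      exact congrArg _ hFwv
    rw [QuotientGroup.eq] at hmk
    have hge : (g w)⁻¹ * g v = g (v - w) := by
      have h1 : g w * g (v - w) = g v := by rw [← gadd]; congr 1; ring
      rw [← h1]; group
    rw [hge, hK] at hmk
    have h2 := hmk 0 (by simpa using (Rn n).zero_mem)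
    rw [gapp] at h2
    obtain ⟨u, hu, hu2⟩ := h2
    have : u = v - w := Subtype.ext (by rw [hu2]; push_cast; ring)
    rw [this] at hu
    simpa using neg_mem hu
  -- the lifted map on the quotient
  set P : (↥(Rn n) ⧸ I) → ↥H := fun x => F (Quotient.out x) with hPdef
  have hout : ∀ x : ↥(Rn n) ⧸ I, Submodule.Quotient.mk (Quotient.out x) = x := fun x =>
    Quotient.out_eq' x
  have Pmk : ∀ w : ↥(Rn n), P (Submodule.Quotient.mk w) = F w := by
    intro w
    apply Fconst
    rw [← Submodule.Quotient.eq I, hout]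
  have Padd : ∀ x y, P (x + y) = P x * P y := by
    intro x y
    conv_lhs => rw [← hout x, ← hout y]
    rw [← Submodule.Quotient.mk_add, Pmk, Fadd]
  have P0 : P 0 = 1 := by
    have : ((0 : ↥(Rn n) ⧸ I)) = Submodule.Quotient.mk 0 := (Submodule.Quotient.mk_zero I).symm
    rw [this, Pmk, F0]
  have Pinj : ∀ x y, P x = P y → x = y := by
    intro x y h
    have := Fsep _ _ h
    rw [← hout x, ← hout y, Submodule.Quotient.eq]
    exact this
  have Ppow : ∀ (m : ℕ) x, P x ^ m = P (m • x) := by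
    intro m x
    induction m with
    | zero => simpa using P0.symm
    | succ m ih => rw [pow_succ, ih, succ_nsmul, Padd]
  have Pord : ∀ x, P x ^ l = 1 := by
    intro x
    have hsm : l • x = 0 := by rw [hldef]; exact card_nsmul_eq_zero'
    rw [Ppow, hsm, P0]
  -- permutation level
  set p : (↥(Rn n) ⧸ I) → Equiv.Perm ℂ := fun x => ((P x : ↥H) : Equiv.Perm ℂ) with hpdef
  have pord : ∀ x, (p x) ^ l = 1 := by
    intro x
    have h2 : ((P x ^ l : ↥H) : Equiv.Perm ℂ) = ((1 : ↥H) : Equiv.Perm ℂ) :=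
      congrArg _ (Pord x)
    rw [SubgroupClass.coe_pow, OneMemClass.coe_one] at h2
    exact h2
  have pcomm : ∀ x y z, p x (p y z) = p y (p x z) := by
    intro x y z
    have h1 : P x * P y = P y * P x := by rw [← Padd, ← Padd, add_comm]
    have h2 : ((P x * P y : ↥H) : Equiv.Perm ℂ) z = ((P y * P x : ↥H) : Equiv.Perm ℂ) z := by
      rw [h1]
    rw [Subgroup.coe_mul, Subgroup.coe_mul, Equiv.Perm.mul_apply, Equiv.Perm.mul_apply] at h2
    exact h2
  have pmul : ∀ x y z, p (x + y) z = p x (p y z) := by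
    intro x y z
    have h2 : ((P (x + y) : ↥H) : Equiv.Perm ℂ) z = ((P x * P y : ↥H) : Equiv.Perm ℂ) z := by
      rw [Padd]
    rw [Subgroup.coe_mul, Equiv.Perm.mul_apply] at h2
    exact h2
  have pH : ∀ x, (p x : Equiv.Perm ℂ) ∈ H := fun x => (P x).2
  have pimg : ∀ x, ⇑(p x) '' ((Rn n : Set ℂ)) = (Rn n : Set ℂ) := fun x =>
    ((hH _).mp (pH x)).2.1
  have piso : ∀ x, IsIsometry ⇑(p x) := fun x => ((hH _).mp (pH x)).1
  -- if p x is a translation then x = 0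
  have trivx : ∀ x c, (∀ z, p x z = z + c) → x = 0 := by
    intro x c hc
    have hc0 : c = 0 := translation_trivial (p x) c hc hl0 (pord x)
    apply Pinj
    rw [P0]
    apply Subtype.ext
    apply Equiv.ext
    intro z
    have := hc z
    rw [hc0] at this
    simpa [hpdef] using this
  -- values of p on Rn
  have pmemR : ∀ x (z : ℂ), z ∈ Rn n → p x z ∈ Rn n := by
    intro x z hz
    have : p x z ∈ ⇑(p x) '' ((Rn n : Set ℂ)) := ⟨z, hz, rfl⟩
    rw [pimg x] at this
    exact this
  haveI : Fintype (↥(Rn n) ⧸ I) := Fintype.ofFinite _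
  -- classification of elements
  have hdisj : ∀ x : ↥(Rn n) ⧸ I,
      (∃ a b : ℂ, ‖a‖ = 1 ∧ ∀ z, p x z = a * z + b) ∨
      (∃ a b : ℂ, ‖a‖ = 1 ∧ ∀ z, p x z = a * (starRingEnd ℂ) z + b) := by
    intro x
    obtain ⟨a, b, hab, hcase⟩ := piso x
    rcases hcase with h | h
    · exact Or.inl ⟨a, b, hab, h⟩
    · exact Or.inr ⟨a, b, hab, h⟩
  by_cases hOR : ∃ x0, ∃ a b : ℂ, ‖a‖ = 1 ∧ ∀ z, p x0 z = a * (starRingEnd ℂ) z + b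
  · -- Case A : some orientation-reversing element exists
    obtain ⟨x0, a0, b0, hab0, hf0⟩ := hOR
    have ha0ne : a0 ≠ 0 := fun h => by simp [h] at hab0
    have hnorm : a0 * (starRingEnd ℂ) a0 = 1 := by
      rw [Complex.mul_conj, Complex.normSq_eq_norm_sq, hab0]
      norm_num
    have hsq : ∀ z, p x0 (p x0 z) = z + (a0 * (starRingEnd ℂ) b0 + b0) := by
      intro z
      rw [hf0, hf0]
      have hc : (starRingEnd ℂ) (a0 * (starRingEnd ℂ) z + b0)
          = (starRingEnd ℂ) a0 * z + (starRingEnd ℂ) b0 := by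
        rw [map_add, map_mul, Complex.conj_conj]
      rw [hc]
      calc a0 * ((starRingEnd ℂ) a0 * z + (starRingEnd ℂ) b0) + b0
          = (a0 * (starRingEnd ℂ) a0) * z + (a0 * (starRingEnd ℂ) b0 + b0) := by ring
        _ = z + (a0 * (starRingEnd ℂ) b0 + b0) := by rw [hnorm]; ring
    have hx00 : x0 + x0 = 0 := by
      apply trivx (x0 + x0) (a0 * (starRingEnd ℂ) b0 + b0)
      intro z
      rw [pmul]
      exact hsq z
    have hx0self : -x0 = x0 := neg_eq_of_add_eq_zero_left hx00
    -- every nonzero orientation preserving element is a point reflection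
    have hptref : ∀ x, x ≠ 0 → (∃ a b : ℂ, ‖a‖ = 1 ∧ ∀ z, p x z = a * z + b) →
        ∃ d, ∀ z, p x z = -z + d := by
      intro x hx hOPx
      obtain ⟨c, d, habc, hfc⟩ := hOPx
      have e0 : c * (a0 * (starRingEnd ℂ) (0:ℂ) + b0) + d
          = a0 * (starRingEnd ℂ) (c * 0 + d) + b0 := by
        have h := pcomm x x0 0
        simp only [hf0, hfc] at h
        exact h
      have e1 : c * (a0 * (starRingEnd ℂ) (1:ℂ) + b0) + d
          = a0 * (starRingEnd ℂ) (c * 1 + d) + b0 := by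
        have h := pcomm x x0 1
        simp only [hf0, hfc] at h
        exact h
      simp only [map_zero, map_one, map_add, map_mul, mul_zero, zero_add, mul_one] at e0 e1
      have hcc : a0 * c = a0 * (starRingEnd ℂ) c := by linear_combination e1 - e0
      have hcconj : (starRingEnd ℂ) c = c := (mul_left_cancel₀ ha0ne hcc).symm
      rcases real_unit_pm hcconj habc with h1 | h1
      · exfalso
        apply hx
        apply trivx x d
        intro z
        rw [hfc z, h1]
        ring
      · exact ⟨d, fun z => by rw [hfc z, h1]; ring⟩
    -- uniqueness of the point reflection
    have huniq : ∀ x y dx dy, (∀ z, p x z = -z + dx) → (∀ z, p y z = -z + dy) → x = y := by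
      intro x y dx dy hx hy
      have hz0 : p x 0 = p (x - y) (p y 0) := by rw [← pmul]; congr 1; ring
      have hz1 : p x 1 = p (x - y) (p y 1) := by rw [← pmul]; congr 1; ring
      rcases hdisj (x - y) with hOPw | hORw
      · obtain ⟨γ, δ, habγ, hw⟩ := hOPw
        rw [hx, hy, hw] at hz0 hz1
        have hγ : γ = 1 := by linear_combination hz1 - hz0
        have hxy : x - y = 0 := by
          apply trivx (x - y) δ
          intro z
          rw [hw z, hγ]
          ring
        exact sub_eq_zero.mp hxy
      · exfalso
        obtain ⟨α, β, habα, hw⟩ := hORw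
        have hzI : p x Complex.I = p (x - y) (p y Complex.I) := by
          rw [← pmul]; congr 1; ring
        rw [hx, hy, hw] at hz0 hz1 hzI
        simp only [map_add, map_neg, map_one, map_zero, Complex.conj_I, neg_zero, zero_add,
          neg_neg] at hz0 hz1 hzI
        have hα1 : α = 1 := by linear_combination hz1 - hz0
        have hαI : α * Complex.I = -Complex.I := by linear_combination hz0 - hzI
        rw [hα1, one_mul] at hαI
        exact Complex.I_ne_zero (by linear_combination hαI / 2)
    -- shifting an orientation-reversing element by x0 yields an o.p. element
    have hshift : ∀ x, (∃ a b : ℂ, ‖a‖ = 1 ∧ ∀ z, p x z = a * (starRingEnd ℂ) z + b) →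
        ∃ a b : ℂ, ‖a‖ = 1 ∧ ∀ z, p (x + x0) z = a * z + b := by
      intro x hx
      obtain ⟨a, b, hab, hf⟩ := hx
      refine ⟨a * (starRingEnd ℂ) a0, a * (starRingEnd ℂ) b0 + b, ?_, ?_⟩
      · rw [norm_mul]
        rw [Complex.norm_conj, hab, hab0, mul_one]
      · intro z
        rw [pmul, hf0, hf, map_add, map_mul, Complex.conj_conj]
        ring
    set u : ↥(Rn n) ⧸ I := if h : ∃ y : ↥(Rn n) ⧸ I, y ≠ 0 ∧
        (∃ a b : ℂ, ‖a‖ = 1 ∧ ∀ z, p y z = a * z + b) then h.choose else 0 with hudef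
    have claim1 : ∀ x, (∃ a b : ℂ, ‖a‖ = 1 ∧ ∀ z, p x z = a * z + b) →
        x = 0 ∨ x = u := by
      intro x hx
      by_cases hx0 : x = 0
      · exact Or.inl hx0
      · right
        have hex : ∃ y : ↥(Rn n) ⧸ I, y ≠ 0 ∧
            (∃ a b : ℂ, ‖a‖ = 1 ∧ ∀ z, p y z = a * z + b) := ⟨x, hx0, hx⟩
        have hu : u = hex.choose := by rw [hudef, dif_pos hex]
        obtain ⟨hune, hOPu⟩ := hex.choose_spec
        rw [← hu] at hune hOPu
        obtain ⟨dx, hdx⟩ := hptref x hx0 hx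
        obtain ⟨du, hdu⟩ := hptref u hune hOPu
        exact huniq x u dx du hdx hdu
    have claim2 : ∀ x, (∃ a b : ℂ, ‖a‖ = 1 ∧
        ∀ z, p x z = a * (starRingEnd ℂ) z + b) → x = x0 ∨ x = u + x0 := by
      intro x hx
      rcases claim1 _ (hshift x hx) with h | h
      · left
        have hxe : x = -x0 := eq_neg_of_add_eq_zero_left h
        rw [hxe, hx0self]
      · right
        have hxe : x = u - x0 := eq_sub_of_add_eq h
        rw [hxe, sub_eq_add_neg, hx0self]
    have cover : ∀ x : ↥(Rn n) ⧸ I, x ∈ ({0, u, x0, u + x0} : Finset (↥(Rn n) ⧸ I)) := by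
      intro x
      simp only [Finset.mem_insert, Finset.mem_singleton]
      rcases hdisj x with h | h
      · rcases claim1 x h with h1 | h1 <;> tauto
      · rcases claim2 x h with h1 | h1 <;> tauto
    have hle4 : l ≤ 4 := by
      rw [hldef, Nat.card_eq_fintype_card, ← Finset.card_univ]
      have h1 : (Finset.univ : Finset (↥(Rn n) ⧸ I)) ⊆ {0, u, x0, u + x0} :=
        fun x _ => cover x
      refine le_trans (Finset.card_le_card h1) ?_
      have h2 : ({x0, u + x0} : Finset (↥(Rn n) ⧸ I)).card ≤ 2 := by
        refine le_trans (Finset.card_insert_le _ _) ?_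
        simp
      have h3 : ({u, x0, u + x0} : Finset (↥(Rn n) ⧸ I)).card ≤ 3 := by
        refine le_trans (Finset.card_insert_le _ _) ?_
        omega
      refine le_trans (Finset.card_insert_le _ _) ?_
      omega
    omega
  · -- Case B : all elements orientation preserving
    have hOP : ∀ x : ↥(Rn n) ⧸ I, ∃ a b : ℂ, ‖a‖ = 1 ∧ ∀ z, p x z = a * z + b := by
      intro x
      rcases hdisj x with h | h
      · exact h
      · exact absurd ⟨x, h⟩ hOR
    set φc : (↥(Rn n) ⧸ I) → ℂ := fun x => p x 1 - p x 0 with hφdef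
    have hφeq : ∀ x (a b : ℂ), (∀ z, p x z = a * z + b) → φc x = a := by
      intro x a b hform
      simp only [hφdef, hform 1, hform 0]
      ring
    have hφR : ∀ x, φc x ∈ Rn n :=
      fun x => sub_mem (pmemR x 1 (Rn n).one_mem) (pmemR x 0 (Rn n).zero_mem)
    have hφN : ∀ x, φc x ^ N = 1 := by
      intro x
      obtain ⟨a, b, hab, hform⟩ := hOP x
      have hpow : φc x ^ l = 1 := by
        rw [hφeq x a b hform]
        exact coeff_pow_eq_one (p x) a b hform hl0 (pord x)
      rw [hNdef]
      exact root_pow_N n hn (hφR x) hl0 hpow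
    have hφinj : Function.Injective φc := by
      intro x y hxy
      obtain ⟨a, b, hab, hfx⟩ := hOP x
      obtain ⟨a', b', hab', hfy⟩ := hOP y
      obtain ⟨e, f, habe, hfw⟩ := hOP (x - y)
      have h0 : p x 0 = p (x - y) (p y 0) := by rw [← pmul]; congr 1; ring
      have h1 : p x 1 = p (x - y) (p y 1) := by rw [← pmul]; congr 1; ring
      rw [hfx, hfy, hfw] at h0 h1
      have haa : a = a' := by
        rw [hφeq x a b hfx, hφeq y a' b' hfy] at hxy
        exact hxy
      have ha'ne : a' ≠ 0 := fun h => by simp [h] at hab'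
      have he1 : e = 1 := by
        have hea : e * a' = a := by linear_combination h0 - h1
        rw [haa] at hea
        exact mul_right_cancel₀ ha'ne (hea.trans (one_mul a').symm)
      have hxy0 : x - y = 0 := by
        apply trivx (x - y) f
        intro z
        rw [hfw z, he1]
        ring
      exact sub_eq_zero.mp hxy0
    have hN0 : 0 < N := by omega
    have hmapsto : ∀ x : ↥(Rn n) ⧸ I, φc x ∈ Polynomial.nthRootsFinset N (1 : ℂ) := by
      intro x
      rw [Polynomial.mem_nthRootsFinset hN0]
      exact hφN x
    have hcardle : Fintype.card (↥(Rn n) ⧸ I) ≤ (Polynomial.nthRootsFinset N (1 : ℂ)).card := by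
      rw [← Finset.card_univ]
      exact Finset.card_le_card_of_injOn φc (fun x _ => hmapsto x) (fun x _ y _ h => hφinj h)
    have hroots : (Polynomial.nthRootsFinset N (1 : ℂ)).card ≤ N := by
      rw [Polynomial.nthRootsFinset_def]
      refine le_trans (Multiset.toFinset_card_le _) ?_
      simpa using Polynomial.card_nthRoots N (1 : ℂ)
    have : l ≤ N := by
      rw [hldef, Nat.card_eq_fintype_card]
      exact le_trans hcardle hroots
    omega
end

section
/- Suppose n ∈ {3,4,5,7,8,9,11,12,13,15,16,17,19,20,21,24,25,27,28,32,33,35,36,40,44,45,48,60,84} (the class number one values). Let φ denote Euler's totient function, and let I be an ideal of R with card(R/I) = 2^{φ(n)} and I ≠ 2R. Then every isometry g of the complex plane with g(R) = R satisfying g(x) − x ∈ I for all x ∈ R is a translation by an element of I: there exists t ∈ I such that g(z) = z + t for all z ∈ ℂ. That is, the colour preserving group K equals T_I. -/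
open Complex

/-! ### Auxiliary lemmas -/

open Polynomial IntermediateField in
lemma stmt14_aux_hprim {n : ℕ} (hn : n ≠ 0) : IsPrimitiveRoot (zeta n) n :=
  Complex.isPrimitiveRoot_exp n hn

set_option maxHeartbeats 1000000 in
set_option synthInstance.maxHeartbeats 400000 in
/-- A surjection from `(ZMod 2)^φ(n)` onto `Rn n / (2)`. -/
lemma stmt14_aux_span_two_surj {n : ℕ} (hn : n ≠ 0) :
    ∃ φ : (Fin n.totient → ZMod 2) → (↥(Rn n) ⧸ (Ideal.span {(2 : ↥(Rn n))})),
      Function.Surjective φ := by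
  classical
  have hζ := stmt14_aux_hprim hn
  have hpos : 0 < n := Nat.pos_of_ne_zero hn
  have hint : IsIntegral ℤ (zeta n) := hζ.isIntegral hpos
  let pb := Algebra.adjoin.powerBasis' (R := ℤ) (S := ℂ) hint
  have hdim : pb.dim = n.totient := by
    show (minpoly ℤ (zeta n)).natDegree = n.totient
    rw [← Polynomial.cyclotomic_eq_minpoly hζ hpos, Polynomial.natDegree_cyclotomic]
  let e : ↥(Rn n) ≃ₐ[ℤ] ↥(Algebra.adjoin ℤ ({zeta n} : Set ℂ)) :=
    Subring.closureEquivAdjoinInt ({zeta n} : Set ℂ)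
  let b : Module.Basis (Fin pb.dim) ℤ ↥(Rn n) := pb.basis.map e.symm.toLinearEquiv
  set J : Ideal ↥(Rn n) := Ideal.span {(2 : ↥(Rn n))} with hJ
  have key : ∀ c d : ℤ, 2 ∣ c - d → ∀ x : ↥(Rn n),
      Ideal.Quotient.mk J (c • x) = Ideal.Quotient.mk J (d • x) := by
    intro c d ⟨k, hk⟩ x
    rw [Ideal.Quotient.eq]
    have : c • x - d • x = (2 : ↥(Rn n)) * (k • x) := by
      rw [← sub_smul, hk]
      push_cast [zsmul_eq_mul]
      ring
    rw [this]
    exact Ideal.mul_mem_right _ _ (Ideal.subset_span rfl)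
  refine ⟨fun v => Ideal.Quotient.mk J (∑ i, ((v (Fin.cast hdim i)).val : ℤ) • b i),
    fun x => ?_⟩
  obtain ⟨y, rfl⟩ := Ideal.Quotient.mk_surjective x
  refine ⟨fun j => ((b.repr y (Fin.cast hdim.symm j) : ℤ) : ZMod 2), ?_⟩
  conv_rhs => rw [← b.sum_repr y]
  dsimp only
  rw [map_sum, map_sum]
  refine Finset.sum_congr rfl fun i _ => ?_
  simp only [Fin.cast_cast, Fin.cast_eq_self]
  apply key
  have : (((((b.repr y) i : ℤ) : ZMod 2)).val : ℤ) - (b.repr y) i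
      = -(((b.repr y i : ℤ)) - ((((b.repr y i : ℤ) : ZMod 2)).val : ℤ)) := by ring
  rw [this]
  apply Dvd.dvd.neg_right
  have h0 : (((b.repr y i : ℤ) - ((((b.repr y i : ℤ) : ZMod 2)).val : ℤ) : ℤ) : ZMod 2) = 0 := by
    push_cast
    simp [ZMod.natCast_val, ZMod.cast_id]
  exact_mod_cast (ZMod.intCast_zmod_eq_zero_iff_dvd _ 2).mp h0

set_option maxHeartbeats 1000000 in
set_option synthInstance.maxHeartbeats 400000 in
/-- If `2 ∈ I` and `Rn n / I` has `2^φ(n)` elements, then `I = (2)`. -/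
lemma stmt14_aux_eq_span_two {n : ℕ} (hn : n ≠ 0) {I : Ideal ↥(Rn n)}
    (hcard : Nat.card (↥(Rn n) ⧸ I) = 2 ^ n.totient)
    (h2 : (2 : ↥(Rn n)) ∈ I) : I = Ideal.span {(2 : ↥(Rn n))} := by
  set J : Ideal ↥(Rn n) := Ideal.span {(2 : ↥(Rn n))} with hJ
  have hJI : J ≤ I := (Ideal.span_singleton_le_iff_mem I).mpr h2
  obtain ⟨φ, hφ⟩ := stmt14_aux_span_two_surj hn
  have finJ : Finite (↥(Rn n) ⧸ J) := Finite.of_surjective φ hφ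
  have hle : Nat.card (↥(Rn n) ⧸ J) ≤ 2 ^ n.totient := by
    have := Nat.card_le_card_of_surjective φ hφ
    simpa [Nat.card_eq_fintype_card] using this
  let f := Ideal.Quotient.factor hJI
  have hf : Function.Surjective f := by
    intro x
    obtain ⟨y, rfl⟩ := Ideal.Quotient.mk_surjective x
    exact ⟨Ideal.Quotient.mk J y, Ideal.Quotient.factor_mk hJI y⟩
  have hge : 2 ^ n.totient ≤ Nat.card (↥(Rn n) ⧸ J) := by
    rw [← hcard]; exact Nat.card_le_card_of_surjective f hf
  have hcards : Nat.card (↥(Rn n) ⧸ J) = Nat.card (↥(Rn n) ⧸ I) := by omega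
  have hbij : Function.Bijective f :=
    (Nat.bijective_iff_surjective_and_card f).mpr ⟨hf, hcards⟩
  refine le_antisymm (fun x hx => ?_) hJI
  have hfx : f (Ideal.Quotient.mk J x) = f 0 := by
    rw [map_zero, Ideal.Quotient.factor_mk, Ideal.Quotient.eq_zero_iff_mem]
    exact hx
  have := hbij.injective hfx
  rwa [← Ideal.Quotient.eq_zero_iff_mem]

set_option maxHeartbeats 1000000 in
set_option synthInstance.maxHeartbeats 400000 in
/-- A root of unity in `Rn n` congruent to `1` modulo `I` equals `1`. -/
lemma stmt14_aux_root_eq_one {n : ℕ} (hn : n ≠ 0) {I : Ideal ↥(Rn n)}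
    (hcard : Nat.card (↥(Rn n) ⧸ I) = 2 ^ n.totient)
    (hne : I ≠ Ideal.span {(2 : ↥(Rn n))})
    {u : ↥(Rn n)} (hu : ∃ k, 0 < k ∧ u ^ k = 1) (huI : u - 1 ∈ I) : u = 1 := by
  obtain ⟨k, hk, huk⟩ := hu
  by_contra hne1
  have htot : 0 < n.totient := Nat.totient_pos.mpr (Nat.pos_of_ne_zero hn)
  have hfin : Finite (↥(Rn n) ⧸ I) :=
    Nat.finite_of_card_ne_zero (by rw [hcard]; positivity)
  have hmku : Ideal.Quotient.mk I u = 1 := by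
    rw [← map_one (Ideal.Quotient.mk I), Ideal.Quotient.eq]; exact huI
  have h2m : (((2 : ℕ) ^ n.totient : ℕ) : ↥(Rn n)) ∈ I := by
    have hcs : (Nat.card (↥(Rn n) ⧸ I)) • (1 : ↥(Rn n) ⧸ I) = 0 := card_nsmul_eq_zero'
    rw [← Ideal.Quotient.eq_zero_iff_mem, map_natCast, ← hcard]
    rw [nsmul_eq_mul, mul_one] at hcs
    exact_mod_cast hcs
  have hord : IsOfFinOrder u := isOfFinOrder_iff_pow_eq_one.2 ⟨k, hk, huk⟩
  set m := orderOf u with hm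
  have hmpos : 0 < m := hord.orderOf_pos
  have hmne1 : m ≠ 1 := fun h => hne1 (orderOf_eq_one_iff.1 h)
  have hmk_pow : ∀ j : ℕ, Ideal.Quotient.mk I (u ^ j) = 1 := fun j => by
    rw [map_pow, hmku, one_pow]
  rcases Nat.even_or_odd m with he | ho
  · obtain ⟨l, hl⟩ := he
    have hl0 : 0 < l := by omega
    have hllt : l < m := by omega
    have hv2 : (u ^ l) ^ 2 = 1 := by rw [← pow_mul]; rw [show l * 2 = m by omega]
                                     exact pow_orderOf_eq_one u
    have hvne : u ^ l ≠ 1 := by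
      intro h
      exact absurd (Nat.le_of_dvd hl0 (orderOf_dvd_of_pow_eq_one h)) (by omega)
    have hv : u ^ l = -1 := by
      have h0 : (u ^ l - 1) * (u ^ l + 1) = (u ^ l) ^ 2 - 1 := by ring
      rw [hv2, sub_self] at h0
      rcases mul_eq_zero.mp h0 with h | h
      · exact absurd (sub_eq_zero.mp h) hvne
      · exact eq_neg_of_add_eq_zero_left h
    have h2I : (2 : ↥(Rn n)) ∈ I := by
      have hl1 : Ideal.Quotient.mk I (u ^ l) = 1 := hmk_pow l
      rw [hv, ← map_one (Ideal.Quotient.mk I), Ideal.Quotient.eq] at hl1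
      have h2 : (-1 : ↥(Rn n)) - 1 = -2 := by ring
      rw [h2] at hl1
      simpa using I.neg_mem hl1
    exact hne (stmt14_aux_eq_span_two hn hcard h2I)
  · have hune : (u : ℂ) ≠ 1 := fun h => hne1 (Subtype.ext h)
    have hsumC : ∑ j ∈ Finset.range m, (u : ℂ) ^ j = 0 := by
      rw [geom_sum_eq hune]
      have hpow : (u : ℂ) ^ m = 1 := by
        have := pow_orderOf_eq_one u
        exact_mod_cast congrArg (fun t : ↥(Rn n) => (t : ℂ)) this
      rw [hpow, sub_self, zero_div]
    have hsum : ∑ j ∈ Finset.range m, u ^ j = 0 := by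
      apply Subtype.ext
      push_cast
      exact hsumC
    have hmI : ((m : ℕ) : ↥(Rn n)) ∈ I := by
      have hms : ((m : ℕ) : ↥(Rn n)) = ∑ j ∈ Finset.range m, ((1 : ↥(Rn n)) - u ^ j) := by
        rw [Finset.sum_sub_distrib, hsum, sub_zero, Finset.sum_const, Finset.card_range,
          nsmul_eq_mul, mul_one]
      rw [hms]
      refine Ideal.sum_mem _ fun j _ => ?_
      rw [← Ideal.Quotient.eq_zero_iff_mem, map_sub, map_one, hmk_pow, sub_self]
    have hcop : IsCoprime ((m : ℕ) : ℤ) (((2 : ℕ) ^ n.totient : ℕ) : ℤ) := by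
      rw [Nat.isCoprime_iff_coprime]
      exact (ho.coprime_two_right).pow_right _
    obtain ⟨x, y, hxy⟩ := hcop
    have h1 : (1 : ↥(Rn n)) ∈ I := by
      have hcast : ((x * m + y * (2 ^ n.totient : ℕ) : ℤ) : ↥(Rn n)) = 1 := by
        rw [hxy]; norm_num
      rw [← hcast]
      push_cast
      exact I.add_mem (I.mul_mem_left _ (by exact_mod_cast hmI))
        (I.mul_mem_left _ (by exact_mod_cast h2m))
    have hIT : I = ⊤ := (Ideal.eq_top_iff_one I).2 h1
    rw [hIT] at hcard
    have hone : Nat.card (↥(Rn n) ⧸ (⊤ : Ideal ↥(Rn n))) = 1 := by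
      have : Subsingleton (↥(Rn n) ⧸ (⊤ : Ideal ↥(Rn n))) :=
        Ideal.Quotient.subsingleton_iff.mpr rfl
      exact Nat.card_eq_one_iff_unique.mpr ⟨⟨fun a b => Subsingleton.elim a b⟩, ⟨0⟩⟩
    rw [hone] at hcard
    have : 2 ≤ 2 ^ n.totient := by
      calc 2 = 2 ^ 1 := rfl
      _ ≤ 2 ^ n.totient := Nat.pow_le_pow_right (by norm_num) htot
    omega

open Polynomial IntermediateField in
set_option maxHeartbeats 1000000 in
set_option synthInstance.maxHeartbeats 400000 in
/-- Kronecker: an element of `Rn n` of absolute value `1` is a root of unity. -/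
lemma stmt14_aux_isRootOfUnity {n : ℕ} (hn : n ≠ 0) {a : ℂ} (ha : a ∈ Rn n)
    (habs : ‖a‖ = 1) : ∃ k, 0 < k ∧ a ^ k = 1 := by
  have hζ : IsPrimitiveRoot (zeta n) n := Complex.isPrimitiveRoot_exp n hn
  have hpos : 0 < n := Nat.pos_of_ne_zero hn
  have hζpow : zeta n ^ n = 1 := hζ.pow_eq_one
  have hζabs : ‖zeta n‖ = 1 := Complex.norm_eq_one_of_pow_eq_one hζpow hn
  have hζint : IsIntegral ℚ (zeta n) := (hζ.isIntegral hpos).tower_top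
  set K : IntermediateField ℚ ℂ := ℚ⟮zeta n⟯ with hK
  haveI : FiniteDimensional ℚ K := IntermediateField.adjoin.finiteDimensional hζint
  haveI : NumberField K := ⟨⟩
  set ζK : K := AdjoinSimple.gen ℚ (zeta n) with hζK
  have hζKcoe : (ζK : ℂ) = zeta n := rfl
  have haA : a ∈ Algebra.adjoin ℤ ({zeta n} : Set ℂ) := by
    rw [Algebra.adjoin_int]; exact ha
  rw [Algebra.adjoin_singleton_eq_range_aeval] at haA
  obtain ⟨p, hp⟩ := haA
  have hp' : aeval (zeta n) p = a := hp
  clear hp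
  have hcoe_aeval : ∀ z : K, ((aeval z p : K) : ℂ) = aeval (z : ℂ) p := by
    intro z
    have h := aeval_algHom_apply (IsScalarTower.toAlgHom ℤ K ℂ) z p
    simpa using h.symm
  set x : K := aeval ζK p with hx
  have hxcoe : (x : ℂ) = a := by rw [hx, hcoe_aeval, hζKcoe, hp']
  have hζKn : ζK ^ n = 1 := by
    apply Subtype.ext; push_cast [hζKcoe]; exact hζpow
  have hζKint : IsIntegral ℤ ζK := by
    refine ⟨X ^ n - C 1, (monic_X_pow_sub_C 1 hn), ?_⟩
    simp [hζKn]
  have hxint : IsIntegral ℤ x := by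
    refine IsIntegral.of_mem_of_fg _ hζKint.fg_adjoin_singleton _ ?_
    rw [Algebra.adjoin_singleton_eq_range_aeval]
    exact ⟨p, rfl⟩
  have hconj_aeval : ∀ z : ℂ, (starRingEnd ℂ) (aeval z p) = aeval ((starRingEnd ℂ) z) p :=
    fun z => (aeval_algHom_apply ((starRingEnd ℂ).toIntAlgHom) z p).symm
  set y : K := aeval ζK⁻¹ p with hy
  have hζKinv : ((ζK⁻¹ : K) : ℂ) = (zeta n)⁻¹ := rfl
  have hconja : aeval ((zeta n)⁻¹) p = (starRingEnd ℂ) a := by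
    rw [← hp', hconj_aeval (zeta n)]
    congr 1
    exact (Complex.inv_eq_conj (by exact hζabs)).symm ▸ rfl
  have hxy : x * y = 1 := by
    have hinj : Function.Injective (algebraMap K ℂ) := (algebraMap K ℂ).injective
    apply hinj
    rw [map_mul, map_one]
    have h1 : algebraMap K ℂ x = a := hxcoe
    have h2 : algebraMap K ℂ y = aeval ((zeta n)⁻¹) p := by
      rw [hy, show algebraMap K ℂ (aeval ζK⁻¹ p) = ((aeval ζK⁻¹ p : K) : ℂ) from rfl,
        hcoe_aeval, hζKinv]
    rw [h1, h2, hconja, Complex.mul_conj, Complex.normSq_eq_norm_sq, habs]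
    norm_num
  have hnorm : ∀ φ : K →+* ℂ, ‖φ x‖ = 1 := by
    intro φ
    have hφ_aeval : ∀ z : K, φ (aeval z p) = aeval (φ z) p :=
      fun z => (aeval_algHom_apply (φ.toIntAlgHom) z p).symm
    set w : ℂ := φ ζK with hw
    have hwn : w ^ n = 1 := by rw [hw, ← map_pow, hζKn, map_one]
    have hwabs : ‖w‖ = 1 := Complex.norm_eq_one_of_pow_eq_one hwn hn
    have hφx : φ x = aeval w p := by rw [hx, hφ_aeval]
    have hφy : φ y = aeval w⁻¹ p := by rw [hy, hφ_aeval, map_inv₀]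
    have hconj : (starRingEnd ℂ) (φ x) = φ y := by
      rw [hφx, hconj_aeval w, hφy, ← Complex.inv_eq_conj hwabs]
    have hone : φ x * (starRingEnd ℂ) (φ x) = 1 := by
      rw [hconj, ← map_mul, hxy, map_one]
    rw [Complex.mul_conj] at hone
    have hns : Complex.normSq (φ x) = 1 := by exact_mod_cast hone
    rw [Complex.norm_def, hns, Real.sqrt_one]
  obtain ⟨k, hk, hxk⟩ := NumberField.Embeddings.pow_eq_one_of_norm_eq_one K ℂ hxint hnorm
  refine ⟨k, hk, ?_⟩
  have hfin : ((x ^ k : K) : ℂ) = 1 := by rw [hxk]; norm_num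
  push_cast at hfin
  rwa [hxcoe] at hfin

/-- `InIdeal` is closed under subtraction. -/
lemma InIdeal.sub' {n : ℕ} {I : Ideal ↥(Rn n)} {x y : ℂ}
    (hx : InIdeal n I x) (hy : InIdeal n I y) : InIdeal n I (x - y) := by
  obtain ⟨w1, hw1, rfl⟩ := hx
  obtain ⟨w2, hw2, rfl⟩ := hy
  exact ⟨w1 - w2, I.sub_mem hw1 hw2, by push_cast; ring⟩

/-- `InIdeal` is closed under multiplication by elements of `Rn n`. -/
lemma InIdeal.mul_left' {n : ℕ} {I : Ideal ↥(Rn n)} {x z : ℂ}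
    (hz : z ∈ Rn n) (hx : InIdeal n I x) : InIdeal n I (z * x) := by
  obtain ⟨w, hw, rfl⟩ := hx
  exact ⟨⟨z, hz⟩ * w, I.mul_mem_left _ hw, by push_cast; ring⟩

lemma InIdeal.to_mem {n : ℕ} {I : Ideal ↥(Rn n)} {x : ↥(Rn n)}
    (hx : InIdeal n I (x : ℂ)) : x ∈ I := by
  obtain ⟨w, hw, hwx⟩ := hx
  rwa [show w = x from Subtype.ext hwx] at hw

/-- for the class number one values of `n`, if `card(R/I) = 2^{φ(n)}` but
`I ≠ 2R`, then every colour preserving isometry is a translation by an element of `I`,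
i.e. `K = T_I`. -/
theorem stmt14 (n : ℕ)
    (hn : n ∈ ({3, 4, 5, 7, 8, 9, 11, 12, 13, 15, 16, 17, 19, 20, 21, 24, 25, 27, 28,
      32, 33, 35, 36, 40, 44, 45, 48, 60, 84} : Set ℕ))
    (I : Ideal ↥(Rn n))
    (hcard : Nat.card (↥(Rn n) ⧸ I) = 2 ^ n.totient)
    (hne : I ≠ Ideal.span {(2 : ↥(Rn n))}) :
    ∀ g : ℂ → ℂ, IsIsometry g → g '' (Rn n : Set ℂ) = (Rn n : Set ℂ) →
      (∀ x ∈ (Rn n : Set ℂ), InIdeal n I (g x - x)) →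
      ∃ t : ℂ, InIdeal n I t ∧ ∀ z : ℂ, g z = z + t := by
  have hn3 : 3 ≤ n := by
    simp only [Set.mem_insert_iff, Set.mem_singleton_iff] at hn
    omega
  have hn0 : n ≠ 0 := by omega
  intro g hg hgR hgI
  obtain ⟨a, b, habs, hcase⟩ := hg
  have h0R : (0 : ℂ) ∈ Rn n := zero_mem _
  have h1R : (1 : ℂ) ∈ Rn n := one_mem _
  have hmem : ∀ z : ℂ, z ∈ Rn n → g z ∈ Rn n := by
    intro z hz
    have : g z ∈ g '' (Rn n : Set ℂ) := ⟨z, hz, rfl⟩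
    rwa [hgR] at this
  have hb : g 0 = b := by
    rcases hcase with h | h <;> simp [h 0]
  have hbI : InIdeal n I b := by
    have := hgI 0 h0R
    rwa [sub_zero, hb] at this
  have hbR : b ∈ Rn n := hb ▸ hmem 0 h0R
  have haR : a ∈ Rn n := by
    have hg1 : g 1 ∈ Rn n := hmem 1 h1R
    have : a = g 1 - b := by
      rcases hcase with h | h <;> simp [h 1]
    rw [this]
    exact sub_mem hg1 hbR
  have haI : InIdeal n I (a - 1) := by
    have h1 := hgI 1 h1R
    have heq : a - 1 = (g 1 - 1) - b := by
      rcases hcase with h | h <;> (rw [h 1]; simp; ring)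
    rw [heq]
    exact h1.sub' hbI
  rcases hcase with h | h
  · -- rotation case: a = 1
    obtain ⟨k, hk, hak⟩ := stmt14_aux_isRootOfUnity hn0 haR habs
    set uR : ↥(Rn n) := ⟨a, haR⟩ with huR
    have huk : uR ^ k = 1 := by apply Subtype.ext; push_cast; exact hak
    have huI : uR - 1 ∈ I := by
      apply InIdeal.to_mem
      have : ((uR - 1 : ↥(Rn n)) : ℂ) = a - 1 := by push_cast; rfl
      rw [this]
      exact haI
    have hu1 : uR = 1 := stmt14_aux_root_eq_one hn0 hcard hne ⟨k, hk, huk⟩ huI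
    have ha1 : a = 1 := by
      have := congrArg (fun t : ↥(Rn n) => (t : ℂ)) hu1
      simpa [huR] using this
    exact ⟨b, hbI, fun z => by rw [h z, ha1, one_mul]⟩
  · -- reflection case: impossible
    exfalso
    have hζ : IsPrimitiveRoot (zeta n) n := Complex.isPrimitiveRoot_exp n hn0
    have hζR : zeta n ∈ Rn n := (zetaR n).2
    have hζne : zeta n ≠ 0 := by
      intro h0
      have := hζ.pow_eq_one
      rw [h0] at this
      simp [hn0] at this
    have hζconj : (starRingEnd ℂ) (zeta n) = (zeta n)⁻¹ := by
      have habsζ : ‖zeta n‖ = 1 :=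
        Complex.norm_eq_one_of_pow_eq_one hζ.pow_eq_one hn0
      rw [← Complex.inv_eq_conj (by exact habsζ)]
    have h2 : InIdeal n I (a * (zeta n)⁻¹ - zeta n) := by
      have hgz := hgI (zeta n) hζR
      have heq : a * (zeta n)⁻¹ - zeta n = (g (zeta n) - zeta n) - b := by
        rw [h (zeta n), hζconj]; ring
      rw [heq]
      exact hgz.sub' hbI
    have h3 : InIdeal n I (a - zeta n ^ 2) := by
      have := InIdeal.mul_left' hζR h2
      have heq : zeta n * (a * (zeta n)⁻¹ - zeta n) = a - zeta n ^ 2 := by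
        field_simp
      rwa [heq] at this
    have h4 : InIdeal n I ((zeta n) ^ 2 - 1) := by
      have heq : (zeta n) ^ 2 - 1 = (a - 1) - (a - zeta n ^ 2) := by ring
      rw [heq]
      exact haI.sub' h3
    set u2 : ↥(Rn n) := zetaR n ^ 2 with hu2
    have hu2I : u2 - 1 ∈ I := by
      apply InIdeal.to_mem
      have : ((u2 - 1 : ↥(Rn n)) : ℂ) = (zeta n) ^ 2 - 1 := by
        rw [hu2]; push_cast; rfl
      rw [this]
      exact h4
    have hu2k : u2 ^ n = 1 := by
      apply Subtype.ext
      rw [hu2]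
      push_cast
      rw [show ((zetaR n : ℂ) ^ 2) ^ n = ((zetaR n : ℂ) ^ n) ^ 2 by ring]
      have : (zetaR n : ℂ) = zeta n := rfl
      rw [this, hζ.pow_eq_one, one_pow]
    have hu21 : u2 = 1 := stmt14_aux_root_eq_one hn0 hcard hne ⟨n, Nat.pos_of_ne_zero hn0, hu2k⟩ hu2I
    have hz2 : zeta n ^ 2 = 1 := by
      have hc : ((u2 : ↥(Rn n)) : ℂ) = 1 := by rw [hu21]; rfl
      rw [hu2, show ((zetaR n ^ 2 : ↥(Rn n)) : ℂ) = (zeta n) ^ 2 by push_cast; rfl] at hc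
      exact hc
    have := hζ.dvd_of_pow_eq_one 2 hz2
    have := Nat.le_of_dvd (by norm_num) this
    omega
end

section
/- Let I be an ideal of R such that card(R/I) is a rational prime and conj(x) ∈ I for every x ∈ I (so the colouring induced by I is perfect). Then conj(z) − z ∈ I for every z ∈ R; that is, the reflection z ↦ conj(z) belongs to the colour preserving group K, and hence T_I ⋊ C₂ is a subgroup of K. -/
open Complex

/-- if `card(R/I)` is a rational prime and `I` is stable under complex
conjugation, then `conj z - z ∈ I` for every `z ∈ R`; that is, the reflection
`z ↦ conj z` lies in `K`, so `T_I ⋊ C₂` is a subgroup of `K`. -/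
theorem stmt16 (n : ℕ) (hn : 3 ≤ n) (hn2 : n % 4 ≠ 2) (I : Ideal ↥(Rn n))
    (hprime : (Nat.card (↥(Rn n) ⧸ I)).Prime)
    (hconj : ∀ x : ↥(Rn n), x ∈ I → InIdeal n I ((starRingEnd ℂ) (x : ℂ))) :
    ∀ z ∈ (Rn n : Set ℂ), InIdeal n I ((starRingEnd ℂ) z - z) := by
  intro z hz
  -- I ≠ ⊤
  have hItop : I ≠ ⊤ := by
    intro h
    have hsub : Subsingleton (↥(Rn n) ⧸ I) := by
      rw [h]
      exact Ideal.Quotient.subsingleton_iff.mpr rfl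
    have h1 : Nat.card (↥(Rn n) ⧸ I) = 1 := Nat.card_of_subsingleton 0
    exact hprime.ne_one h1
  haveI : Nontrivial (↥(Rn n) ⧸ I) := Ideal.Quotient.nontrivial_iff.mpr hItop
  haveI : Finite (↥(Rn n) ⧸ I) := Nat.finite_of_card_ne_zero hprime.pos.ne'
  -- the additive group of the quotient is generated by 1
  have hord : addOrderOf (1 : ↥(Rn n) ⧸ I) = Nat.card (↥(Rn n) ⧸ I) := by
    rcases (hprime.eq_one_or_self_of_dvd _ (addOrderOf_dvd_natCard _)) with h | h
    · exfalso
      have h10 : (1 : ↥(Rn n) ⧸ I) = 0 := AddMonoid.addOrderOf_eq_one_iff.mp h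
      have h1I : (1 : ↥(Rn n)) ∈ I := by
        rw [← Ideal.Quotient.eq_zero_iff_mem, map_one]
        exact h10
      exact hItop ((Ideal.eq_top_iff_one I).mpr h1I)
    · exact h
  have htop : AddSubgroup.zmultiples (1 : ↥(Rn n) ⧸ I) = ⊤ := by
    apply AddSubgroup.eq_top_of_card_eq
    rw [Nat.card_zmultiples, hord]
  set zR : ↥(Rn n) := ⟨z, hz⟩ with hzR
  have hmem : Ideal.Quotient.mk I zR ∈ AddSubgroup.zmultiples (1 : ↥(Rn n) ⧸ I) := by
    rw [htop]; trivial
  obtain ⟨k, hk⟩ := AddSubgroup.mem_zmultiples_iff.mp hmem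
  -- so zR - k ∈ I
  have hzk : zR - (k : ↥(Rn n)) ∈ I := by
    refine Ideal.Quotient.eq.mp ?_
    rw [map_intCast (Ideal.Quotient.mk I) k, ← hk]
    simp [zsmul_eq_mul]
  obtain ⟨w, hwI, hwval⟩ := hconj _ hzk
  refine ⟨w - (zR - (k : ↥(Rn n))), I.sub_mem hwI hzk, ?_⟩
  have hcoe : ((zR - (k : ↥(Rn n)) : ↥(Rn n)) : ℂ) = z - (k : ℂ) := by
    push_cast [hzR]
    ring
  rw [show ((w - (zR - (k : ↥(Rn n))) : ↥(Rn n)) : ℂ)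
      = (w : ℂ) - ((zR - (k : ↥(Rn n)) : ↥(Rn n)) : ℂ) from rfl,
    hwval, hcoe, map_sub, map_intCast (starRingEnd ℂ) k]
  ring
end
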